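/- arXiv:2602.10989 — 4 statements merged into one kernel-verified Lean document; each statement's English description precedes it below -/
import Mathlib

section
/- Under the exponential tail bound, for every t ∈ (0,1) the map x ↦ E[x⋆ | x_t = x] is differentiable on ℝᵈ and its Jacobian satisfies ∇_x E[x⋆ | x_t = x] = (β(t)/(t σ(t)²)) · (P_t(x) Q_t(x) − R_t(x) R_t(x)ᵀ)/Q_t(x)², where, with weight w_t(x,y) = exp(−β(t)²|y|²/(2tσ(t)²) + β(t) (y·x)/(tσ(t)²)), we set P_t(x) = ∫ y yᵀ ρ⋆(y) w_t(x,y) dy, Q_t(x) = ∫ ρ⋆(y) w_t(x,y) dy, and R_t(x) = ∫ y ρ⋆(y) w_t(x,y) dy; the matrix (P_t Q_t − R_t R_tᵀ)/Q_t² is the conditional covariance of x⋆ given x_t = x. -/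
open MeasureTheory Real Filter Set
open scoped Topology

noncomputable section

/-- The Gaussian reweighting factor appearing in the conditional mean
`E[x⋆ | x_t = x]` for the stochastic interpolant `x_t = β(t) x⋆ + σ(t) √t z`. -/
def interpWeight {d : ℕ} (β σ : ℝ → ℝ) (t : ℝ) (x y : EuclideanSpace ℝ (Fin d)) : ℝ :=
  Real.exp (-(β t) ^ 2 * ‖y‖ ^ 2 / (2 * t * σ t ^ 2) + β t * (inner ℝ y x : ℝ) / (t * σ t ^ 2))

/-- The conditional mean `E[x⋆ | x_t = x]`. -/
def condMean {d : ℕ} (ρ : EuclideanSpace ℝ (Fin d) → ℝ) (β σ : ℝ → ℝ) (t : ℝ)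
    (x : EuclideanSpace ℝ (Fin d)) : EuclideanSpace ℝ (Fin d) :=
  (∫ y, ρ y * interpWeight β σ t x y)⁻¹ • ∫ y, (ρ y * interpWeight β σ t x y) • y

open scoped RealInnerProductSpace

/-- Real Gaussian integrability on Euclidean space. -/
lemma gaussBase {d : ℕ} {a : ℝ} (ha : 0 < a) :
    Integrable (fun y : EuclideanSpace ℝ (Fin d) => Real.exp (-a * ‖y‖^2)) := by
  have h := (GaussianFourier.integrable_cexp_neg_mul_sq_norm_add (V := EuclideanSpace ℝ (Fin d))
    (b := (a : ℂ)) (by simpa using ha) 0 (0 : EuclideanSpace ℝ (Fin d))).norm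
  have he : ∀ y : EuclideanSpace ℝ (Fin d),
      ‖Complex.exp (-(a:ℂ) * (‖y‖:ℂ) ^ 2 + 0 * ((inner ℝ (0 : EuclideanSpace ℝ (Fin d)) y : ℝ):ℂ))‖
        = Real.exp (-a * ‖y‖^2) := by
    intro y
    rw [Complex.norm_exp]
    congr 1
    simp [Complex.add_re, Complex.mul_re, ← Complex.ofReal_pow]
  simpa only [he] using h

/-- Polynomial times Gaussian with linear term is integrable on Euclidean space. -/
lemma gaussPoly {d : ℕ} {a : ℝ} (ha : 0 < a) (b : ℝ) (p : ℕ) :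
    Integrable (fun y : EuclideanSpace ℝ (Fin d) =>
      ‖y‖ ^ p * Real.exp (-a * ‖y‖^2 + b * ‖y‖)) := by
  have key : ∀ r : ℝ, 0 ≤ r →
      r ^ p * Real.exp (-a * r^2 + b * r) ≤
        Real.exp (((p:ℝ)+b)^2/(2*a)) * Real.exp (-(a/2) * r^2) := by
    intro r hr
    have h1 : r ^ p ≤ Real.exp ((p:ℝ) * r) := by
      calc r ^ p ≤ (Real.exp r) ^ p :=
            pow_le_pow_left₀ hr (le_trans (by linarith) (Real.add_one_le_exp r)) p
        _ = Real.exp ((p:ℝ) * r) := by rw [← Real.exp_nat_mul]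
    calc r ^ p * Real.exp (-a * r^2 + b * r)
        ≤ Real.exp ((p:ℝ) * r) * Real.exp (-a * r^2 + b * r) :=
          mul_le_mul_of_nonneg_right h1 (Real.exp_nonneg _)
      _ = Real.exp (-a * r^2 + ((p:ℝ)+b) * r) := by rw [← Real.exp_add]; ring_nf
      _ ≤ Real.exp (((p:ℝ)+b)^2/(2*a) + -(a/2) * r^2) := by
          apply Real.exp_le_exp.2
          rw [div_add' _ _ _ (by positivity), le_div_iff₀ (by positivity)]
          nlinarith [sq_nonneg (a * r - ((p:ℝ)+b)), sq_nonneg r]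
      _ = Real.exp (((p:ℝ)+b)^2/(2*a)) * Real.exp (-(a/2) * r^2) := Real.exp_add _ _
  refine Integrable.mono' ((gaussBase (half_pos ha)).const_mul
    (Real.exp (((p:ℝ)+b)^2/(2*a)))) ?_ (Eventually.of_forall fun y => ?_)
  · exact ((continuous_norm.pow p).mul (Real.continuous_exp.comp
      (by continuity))).aestronglyMeasurable
  · rw [Real.norm_eq_abs, abs_of_nonneg (by positivity)]
    exact key ‖y‖ (norm_nonneg y)

set_option maxHeartbeats 1000000 in
set_option synthInstance.maxHeartbeats 400000 in
/-- under the exponential tail bound, for every `t ∈ (0,1)` the map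
`x ↦ E[x⋆ | x_t = x]` is differentiable and its Jacobian equals
`(β(t)/(t σ(t)²)) (P_t Q_t − R_t R_tᵀ)/Q_t²`. -/
theorem conditional_mean_jacobian {d : ℕ} (ρ : EuclideanSpace ℝ (Fin d) → ℝ) (β σ : ℝ → ℝ)
    (hβC : ContDiff ℝ 1 β) (hσC : ContDiff ℝ 1 σ)
    (hβ0 : β 0 = 0) (hβ1 : β 1 = 1) (hσ0 : 0 < σ 0) (hσ1 : σ 1 = 0)
    (hβ' : ∀ t ∈ Icc (0:ℝ) 1, 0 < deriv β t)
    (hσ' : ∀ t ∈ Icc (0:ℝ) 1, deriv σ t < 0)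
    (hρnn : ∀ y, 0 ≤ ρ y) (hρ1 : ∫ y, ρ y = 1)
    (C₁ C₂ : ℝ) (hC₁ : 0 < C₁) (hC₂ : 0 < C₂)
    (htail : ∀ y, ρ y ≤ C₂ * Real.exp (-C₁ * ‖y‖)) :
    ∀ t ∈ Ioo (0:ℝ) 1, ∀ x : EuclideanSpace ℝ (Fin d),
      ∃ L : EuclideanSpace ℝ (Fin d) →L[ℝ] EuclideanSpace ℝ (Fin d),
        HasFDerivAt (fun x' => condMean ρ β σ t x') L x ∧
        ∀ v : EuclideanSpace ℝ (Fin d),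
          L v = (β t / (t * σ t ^ 2)) •
            (((∫ y, ρ y * interpWeight β σ t x y) ^ 2)⁻¹ •
              ((∫ y, ρ y * interpWeight β σ t x y) •
                  (∫ y, (ρ y * interpWeight β σ t x y * (inner ℝ y v : ℝ)) • y) -
                (inner ℝ (∫ y, (ρ y * interpWeight β σ t x y) • y) v : ℝ) •
                  (∫ y, (ρ y * interpWeight β σ t x y) • y))) := by
  intro t ht x₀
  obtain ⟨ht0, ht1⟩ := ht
  -- positivity of β t and σ t
  have hβt : 0 < β t := by
    have hmono : StrictMonoOn β (Icc 0 1) :=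
      strictMonoOn_of_deriv_pos (convex_Icc 0 1) hβC.continuous.continuousOn
        (fun s hs => hβ' s (interior_subset hs))
    have := hmono (left_mem_Icc.2 zero_le_one) ⟨ht0.le, ht1.le⟩ ht0
    rwa [hβ0] at this
  have hσt : 0 < σ t := by
    have hanti : StrictAntiOn σ (Icc 0 1) :=
      strictAntiOn_of_deriv_neg (convex_Icc 0 1) hσC.continuous.continuousOn
        (fun s hs => hσ' s (interior_subset hs))
    have := hanti ⟨ht0.le, ht1.le⟩ (right_mem_Icc.2 zero_le_one) ht1
    rwa [hσ1] at this
  set c : ℝ := β t / (t * σ t ^ 2) with hc_def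
  set a : ℝ := β t ^ 2 / (2 * (t * σ t ^ 2)) with ha_def
  have hc : 0 < c := by rw [hc_def]; positivity
  have ha : 0 < a := by rw [ha_def]; positivity
  -- rewrite the weight
  have hw : ∀ x y : EuclideanSpace ℝ (Fin d),
      interpWeight β σ t x y = Real.exp (-a * ‖y‖ ^ 2 + c * ⟪y, x⟫) := by
    intro x y
    simp only [interpWeight, ha_def, hc_def]
    congr 1
    field_simp
  have hwpos : ∀ x y : EuclideanSpace ℝ (Fin d), 0 < interpWeight β σ t x y := by
    intro x y; rw [hw]; exact Real.exp_pos _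
  have hwcont : ∀ x : EuclideanSpace ℝ (Fin d),
      Continuous fun y => interpWeight β σ t x y := by
    intro x
    simp only [hw]
    exact Real.continuous_exp.comp (((continuous_const.mul (continuous_norm.pow 2))).add
      (continuous_const.mul (continuous_id.inner continuous_const)))
  -- uniform bound on the weight
  have hwle : ∀ (x y : EuclideanSpace ℝ (Fin d)),
      interpWeight β σ t x y ≤ Real.exp (-a * ‖y‖ ^ 2 + (c * ‖x‖) * ‖y‖) := by
    intro x y
    rw [hw]
    apply Real.exp_le_exp.2
    have : ⟪y, x⟫ ≤ ‖y‖ * ‖x‖ := real_inner_le_norm y x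
    nlinarith [norm_nonneg y, norm_nonneg x, hc]
  -- ρ is integrable and measurable
  have hρint : Integrable ρ := by
    by_contra h
    rw [integral_undef h] at hρ1
    exact one_ne_zero hρ1.symm
  have hρmeas := hρint.aestronglyMeasurable
  have hρle : ∀ y, ρ y ≤ C₂ := fun y =>
    (htail y).trans (by
      nlinarith [Real.exp_le_one_iff.2 (by nlinarith [norm_nonneg y] : -C₁ * ‖y‖ ≤ 0)])
  -- integrability of the main integrands, for every x
  have hQint : ∀ x : EuclideanSpace ℝ (Fin d),
      Integrable (fun y => ρ y * interpWeight β σ t x y) := by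
    intro x
    refine Integrable.mono' ((gaussPoly ha (c * ‖x‖) 0).const_mul C₂)
      (hρmeas.mul (hwcont x).aestronglyMeasurable) (Eventually.of_forall fun y => ?_)
    rw [Real.norm_eq_abs, abs_of_nonneg (mul_nonneg (hρnn y) (hwpos x y).le), pow_zero, one_mul]
    exact mul_le_mul (hρle y) (hwle x y) (hwpos x y).le hC₂.le
  have hFint : ∀ x : EuclideanSpace ℝ (Fin d),
      Integrable (fun y => (ρ y * interpWeight β σ t x y) • y) := by
    intro x
    refine Integrable.mono' ((gaussPoly ha (c * ‖x‖) 1).const_mul C₂)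
      (((hρmeas.mul (hwcont x).aestronglyMeasurable)).smul aestronglyMeasurable_id)
      (Eventually.of_forall fun y => ?_)
    rw [norm_smul, Real.norm_eq_abs, abs_of_nonneg (mul_nonneg (hρnn y) (hwpos x y).le), pow_one]
    calc ρ y * interpWeight β σ t x y * ‖y‖
        ≤ C₂ * Real.exp (-a * ‖y‖ ^ 2 + (c * ‖x‖) * ‖y‖) * ‖y‖ := by
          apply mul_le_mul_of_nonneg_right _ (norm_nonneg y)
          exact mul_le_mul (hρle y) (hwle x y) (hwpos x y).le hC₂.le
      _ = C₂ * (‖y‖ * Real.exp (-a * ‖y‖ ^ 2 + (c * ‖x‖) * ‖y‖)) := by ring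
  -- pointwise derivative of the weight
  have hdw : ∀ (x y : EuclideanSpace ℝ (Fin d)),
      HasFDerivAt (fun x' => interpWeight β σ t x' y)
        ((interpWeight β σ t x y * c) • innerSL ℝ y) x := by
    intro x y
    have h1 : HasFDerivAt (fun x' : EuclideanSpace ℝ (Fin d) => ⟪y, x'⟫)
        (innerSL ℝ y) x := (innerSL ℝ y).hasFDerivAt
    have h0 : HasFDerivAt (fun x' : EuclideanSpace ℝ (Fin d) => -a * ‖y‖ ^ 2 + c * ⟪y, x'⟫)
        (c • innerSL ℝ y) x := (h1.const_mul c).const_add _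
    have h2 := h0.exp
    simp only [hw]
    rw [smul_smul] at h2
    exact h2
  have hsmulRight_smul : ∀ (r : ℝ) (L : EuclideanSpace ℝ (Fin d) →L[ℝ] ℝ)
      (y : EuclideanSpace ℝ (Fin d)), (r • L).smulRight y = r • (L.smulRight y) := by
    intro r L y; ext v; simp [smul_smul, mul_assoc]
  have hdF : ∀ (x y : EuclideanSpace ℝ (Fin d)),
      HasFDerivAt (fun x' => (ρ y * interpWeight β σ t x' y) • y)
        ((ρ y * interpWeight β σ t x y * c) • ((innerSL ℝ y).smulRight y)) x := by
    intro x y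
    have h1 := ((hdw x y).const_mul (ρ y)).smul_const y
    rw [smul_smul, hsmulRight_smul, ← mul_assoc] at h1
    exact h1
  have hdQ : ∀ (x y : EuclideanSpace ℝ (Fin d)),
      HasFDerivAt (fun x' => ρ y * interpWeight β σ t x' y)
        ((ρ y * interpWeight β σ t x y * c) • innerSL ℝ y) x := by
    intro x y
    have h1 := (hdw x y).const_mul (ρ y)
    rw [smul_smul, ← mul_assoc] at h1
    exact h1
  -- measurability of the candidate derivatives
  have hsmcont : Continuous fun y : EuclideanSpace ℝ (Fin d) => (innerSL ℝ y).smulRight y := by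
    exact ((ContinuousLinearMap.smulRightL ℝ (EuclideanSpace ℝ (Fin d))
      (EuclideanSpace ℝ (Fin d))).continuous₂).comp ((innerSL ℝ).continuous.prodMk continuous_id)
  have hF'meas : AEStronglyMeasurable (fun y : EuclideanSpace ℝ (Fin d) =>
      (ρ y * interpWeight β σ t x₀ y * c) • ((innerSL ℝ y).smulRight y)) volume :=
    ((hρmeas.mul (hwcont x₀).aestronglyMeasurable).mul aestronglyMeasurable_const).smul
      hsmcont.aestronglyMeasurable
  have hG'meas : AEStronglyMeasurable (fun y : EuclideanSpace ℝ (Fin d) =>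
      (ρ y * interpWeight β σ t x₀ y * c) • (innerSL ℝ y)) volume :=
    ((hρmeas.mul (hwcont x₀).aestronglyMeasurable).mul aestronglyMeasurable_const).smul
      (innerSL ℝ).continuous.aestronglyMeasurable
  -- norm bounds for the candidate derivatives
  have hnormF' : ∀ (x y : EuclideanSpace ℝ (Fin d)),
      ‖(ρ y * interpWeight β σ t x y * c) • ((innerSL ℝ y).smulRight y)‖
        ≤ (C₂ * c) * (‖y‖ ^ 2 * Real.exp (-a * ‖y‖ ^ 2 + (c * ‖x‖) * ‖y‖)) := by
    intro x y
    refine le_trans (norm_smul_le (ρ y * interpWeight β σ t x y * c)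
      (((innerSL ℝ) y).smulRight y)) ?_
    rw [ContinuousLinearMap.norm_smulRight_apply, innerSL_apply_norm,
      Real.norm_eq_abs, abs_of_nonneg (mul_nonneg (mul_nonneg (hρnn y) (hwpos x y).le) hc.le)]
    have h1 : ρ y * interpWeight β σ t x y
        ≤ C₂ * Real.exp (-a * ‖y‖ ^ 2 + (c * ‖x‖) * ‖y‖) :=
      mul_le_mul (hρle y) (hwle x y) (hwpos x y).le hC₂.le
    calc ρ y * interpWeight β σ t x y * c * (‖y‖ * ‖y‖)
        = (ρ y * interpWeight β σ t x y) * (c * (‖y‖ * ‖y‖)) := by ring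
      _ ≤ (C₂ * Real.exp (-a * ‖y‖ ^ 2 + (c * ‖x‖) * ‖y‖)) * (c * (‖y‖ * ‖y‖)) :=
          mul_le_mul_of_nonneg_right h1 (by positivity)
      _ = (C₂ * c) * (‖y‖ ^ 2 * Real.exp (-a * ‖y‖ ^ 2 + (c * ‖x‖) * ‖y‖)) := by ring
  have hnormG' : ∀ (x y : EuclideanSpace ℝ (Fin d)),
      ‖(ρ y * interpWeight β σ t x y * c) • (innerSL ℝ y)‖
        ≤ (C₂ * c) * (‖y‖ ^ 1 * Real.exp (-a * ‖y‖ ^ 2 + (c * ‖x‖) * ‖y‖)) := by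
    intro x y
    refine le_trans (norm_smul_le (ρ y * interpWeight β σ t x y * c) ((innerSL ℝ) y)) ?_
    rw [innerSL_apply_norm, Real.norm_eq_abs,
      abs_of_nonneg (mul_nonneg (mul_nonneg (hρnn y) (hwpos x y).le) hc.le)]
    have h1 : ρ y * interpWeight β σ t x y
        ≤ C₂ * Real.exp (-a * ‖y‖ ^ 2 + (c * ‖x‖) * ‖y‖) :=
      mul_le_mul (hρle y) (hwle x y) (hwpos x y).le hC₂.le
    calc ρ y * interpWeight β σ t x y * c * ‖y‖
        = (ρ y * interpWeight β σ t x y) * (c * ‖y‖) := by ring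
      _ ≤ (C₂ * Real.exp (-a * ‖y‖ ^ 2 + (c * ‖x‖) * ‖y‖)) * (c * ‖y‖) :=
          mul_le_mul_of_nonneg_right h1 (by positivity)
      _ = (C₂ * c) * (‖y‖ ^ 1 * Real.exp (-a * ‖y‖ ^ 2 + (c * ‖x‖) * ‖y‖)) := by ring
  have hF'int : Integrable (fun y : EuclideanSpace ℝ (Fin d) =>
      (ρ y * interpWeight β σ t x₀ y * c) • ((innerSL ℝ y).smulRight y)) :=
    Integrable.mono' ((gaussPoly ha (c * ‖x₀‖) 2).const_mul (C₂ * c)) hF'meas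
      (Eventually.of_forall fun y => hnormF' x₀ y)
  have hG'int : Integrable (fun y : EuclideanSpace ℝ (Fin d) =>
      (ρ y * interpWeight β σ t x₀ y * c) • (innerSL ℝ y)) :=
    Integrable.mono' ((gaussPoly ha (c * ‖x₀‖) 1).const_mul (C₂ * c)) hG'meas
      (Eventually.of_forall fun y => hnormG' x₀ y)
  -- bound over the unit ball around x₀
  have hballexp : ∀ (y : EuclideanSpace ℝ (Fin d)), ∀ x ∈ Metric.ball x₀ 1,
      Real.exp (-a * ‖y‖ ^ 2 + (c * ‖x‖) * ‖y‖)
        ≤ Real.exp (-a * ‖y‖ ^ 2 + (c * (‖x₀‖ + 1)) * ‖y‖) := by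
    intro y x hx
    apply Real.exp_le_exp.2
    have hxn : ‖x‖ ≤ ‖x₀‖ + 1 := by
      have h1 : ‖x‖ ≤ ‖x₀‖ + ‖x - x₀‖ := by
        calc ‖x‖ = ‖x₀ + (x - x₀)‖ := by rw [add_sub_cancel]
          _ ≤ ‖x₀‖ + ‖x - x₀‖ := norm_add_le _ _
      have h2 : ‖x - x₀‖ < 1 := by rwa [Metric.mem_ball, dist_eq_norm] at hx
      linarith
    have h3 := mul_le_mul_of_nonneg_right (mul_le_mul_of_nonneg_left hxn hc.le) (norm_nonneg y)
    linarith
  -- differentiation under the integral sign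
  have hFder : HasFDerivAt (fun x => ∫ y, (ρ y * interpWeight β σ t x y) • y)
      (∫ y, (ρ y * interpWeight β σ t x₀ y * c) • ((innerSL ℝ y).smulRight y)) x₀ := by
    apply hasFDerivAt_integral_of_dominated_of_fderiv_le (μ := volume) (s := Metric.ball x₀ 1) (Metric.ball_mem_nhds x₀ one_pos)
      (bound := fun y => (C₂ * c) * (‖y‖ ^ 2 *
        Real.exp (-a * ‖y‖ ^ 2 + (c * (‖x₀‖ + 1)) * ‖y‖)))
      (Eventually.of_forall fun x =>
        ((hρmeas.mul (hwcont x).aestronglyMeasurable)).smul aestronglyMeasurable_id)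
      (hFint x₀) hF'meas
      (Eventually.of_forall fun y x hx => ?_)
      ((gaussPoly ha (c * (‖x₀‖ + 1)) 2).const_mul (C₂ * c))
      (Eventually.of_forall fun y x hx => hdF x y)
    refine (hnormF' x y).trans ?_
    beta_reduce
    exact mul_le_mul_of_nonneg_left
      (mul_le_mul_of_nonneg_left (hballexp y x hx) (by positivity)) (by positivity)
  have hQder : HasFDerivAt (fun x => ∫ y, ρ y * interpWeight β σ t x y)
      (∫ y, (ρ y * interpWeight β σ t x₀ y * c) • (innerSL ℝ y)) x₀ := by
    apply hasFDerivAt_integral_of_dominated_of_fderiv_le (μ := volume) (s := Metric.ball x₀ 1) (Metric.ball_mem_nhds x₀ one_pos)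
      (bound := fun y => (C₂ * c) * (‖y‖ ^ 1 *
        Real.exp (-a * ‖y‖ ^ 2 + (c * (‖x₀‖ + 1)) * ‖y‖)))
      (Eventually.of_forall fun x => hρmeas.mul (hwcont x).aestronglyMeasurable)
      (hQint x₀) hG'meas
      (Eventually.of_forall fun y x hx => ?_)
      ((gaussPoly ha (c * (‖x₀‖ + 1)) 1).const_mul (C₂ * c))
      (Eventually.of_forall fun y x hx => hdQ x y)
    refine (hnormG' x y).trans ?_
    beta_reduce
    exact mul_le_mul_of_nonneg_left
      (mul_le_mul_of_nonneg_left (hballexp y x hx) (by positivity)) (by positivity)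
  -- positivity of the normalizing constant
  set Q : ℝ := ∫ y, ρ y * interpWeight β σ t x₀ y with hQ_def
  have hQpos : 0 < Q := by
    rw [hQ_def, integral_pos_iff_support_of_nonneg
      (fun y => mul_nonneg (hρnn y) (hwpos x₀ y).le) (hQint x₀)]
    have hsupp : (Function.support fun y => ρ y * interpWeight β σ t x₀ y)
        = Function.support ρ := by
      ext y
      simp [Function.mem_support, (hwpos x₀ y).ne']
    rw [hsupp]
    by_contra hz
    push_neg at hz
    have hzero : volume (Function.support ρ) = 0 := le_antisymm hz (by simp)
    have h0 : ∀ᵐ y, ρ y = (0:ℝ) := by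
      rw [MeasureTheory.ae_iff]
      simpa [Function.support] using hzero
    rw [integral_congr_ae h0, integral_zero] at hρ1
    exact one_ne_zero hρ1.symm
  have hQne : Q ≠ 0 := hQpos.ne'
  -- derivative of the inverse of the normalizing constant
  have hinv := (hasDerivAt_inv hQne).comp_hasFDerivAt x₀ hQder
  have hL := hinv.smul hFder
  refine ⟨_, hL, ?_⟩
  intro v
  -- apply the derivative to v
  have happF : (∫ y, (ρ y * interpWeight β σ t x₀ y * c) • ((innerSL ℝ y).smulRight y)) v
      = c • ∫ y, (ρ y * interpWeight β σ t x₀ y * ⟪y, v⟫) • y := by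
    rw [ContinuousLinearMap.integral_apply hF'int v, ← integral_smul]
    refine integral_congr_ae (Eventually.of_forall fun y => ?_)
    simp only [ContinuousLinearMap.smul_apply, ContinuousLinearMap.smulRight_apply,
      innerSL_apply_apply, smul_smul]
    congr 1
    ring
  have happQ : (∫ y, (ρ y * interpWeight β σ t x₀ y * c) • (innerSL ℝ y)) v
      = c * ⟪∫ y, (ρ y * interpWeight β σ t x₀ y) • y, v⟫ := by
    rw [ContinuousLinearMap.integral_apply hG'int v]
    have heq : ∀ y : EuclideanSpace ℝ (Fin d),
        ((ρ y * interpWeight β σ t x₀ y * c) • (innerSL ℝ y)) v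
          = c * ⟪v, (ρ y * interpWeight β σ t x₀ y) • y⟫ := by
      intro y
      simp only [ContinuousLinearMap.smul_apply, innerSL_apply_apply, smul_eq_mul,
        real_inner_smul_right]
      rw [real_inner_comm]
      ring
    simp_rw [heq]
    rw [integral_const_mul, integral_inner (hFint x₀) v, real_inner_comm]
  show ((∫ y, ρ y * interpWeight β σ t x₀ y)⁻¹ •
      (∫ y, (ρ y * interpWeight β σ t x₀ y * c) • ((innerSL ℝ y).smulRight y)) +
      ((-((∫ y, ρ y * interpWeight β σ t x₀ y) ^ 2)⁻¹) •
        (∫ y, (ρ y * interpWeight β σ t x₀ y * c) • (innerSL ℝ y))).smulRight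
          (∫ y, (ρ y * interpWeight β σ t x₀ y) • y)) v = _
  rw [ContinuousLinearMap.add_apply, ContinuousLinearMap.smul_apply,
    ContinuousLinearMap.smulRight_apply, ContinuousLinearMap.smul_apply, happF, happQ]
  simp only [smul_eq_mul]
  rw [← hQ_def]
  match_scalars <;> field_simp <;> ring
end
end

section
/- If the probability density ρ⋆ on ℝᵈ is supported in the closed ball of radius R centered at the origin, then for every t ∈ (0,1) and x ∈ ℝᵈ, the Jacobian of the conditional mean satisfies ‖∇_x E[x⋆ | x_t = x]‖ ≤ 4R² β(t)/(t σ(t)²), and consequently the Jacobian of the drift satisfies ‖∇_x b_t(x)‖ ≤ |σ'(t)/σ(t)| + 4R² (β(t)/(t σ(t)²)) |β'(t) − β(t)σ'(t)/σ(t)|. -/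
set_option linter.unusedSectionVars false


open MeasureTheory Real Filter Set
open scoped Topology

noncomputable section

/-- The drift `b_t(x) = β'(t) E[x⋆|x_t=x] + (σ'(t)/σ(t)) (x − β(t) E[x⋆|x_t=x])`. -/
def drift {d : ℕ} (ρ : EuclideanSpace ℝ (Fin d) → ℝ) (β σ : ℝ → ℝ) (t : ℝ)
    (x : EuclideanSpace ℝ (Fin d)) : EuclideanSpace ℝ (Fin d) :=
  deriv β t • condMean ρ β σ t x + (deriv σ t / σ t) • (x - β t • condMean ρ β σ t x)

lemma abs_exp_sub_one_le' (a : ℝ) : |Real.exp a - 1| ≤ |a| * Real.exp |a| := by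
  rcases le_or_gt 0 a with h | h
  · rw [abs_of_nonneg h, abs_of_nonneg (by linarith [Real.one_le_exp h])]
    have h2 := mul_le_mul_of_nonneg_right (Real.add_one_le_exp (-a)) (Real.exp_pos a).le
    rw [← Real.exp_add, neg_add_cancel, Real.exp_zero] at h2
    nlinarith
  · rw [abs_of_neg h, abs_of_nonpos (by nlinarith [Real.exp_lt_one_iff.2 h] : Real.exp a - 1 ≤ 0)]
    nlinarith [Real.add_one_le_exp a, Real.one_le_exp (by linarith : (0:ℝ) ≤ -a)]


lemma iw_eq {d : ℕ} (β σ : ℝ → ℝ) (t : ℝ) (ht : t ≠ 0) (hσt : σ t ≠ 0)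
    (x y : EuclideanSpace ℝ (Fin d)) :
    interpWeight β σ t x y =
      Real.exp (-(β t) ^ 2 * ‖y‖ ^ 2 / (2 * t * σ t ^ 2)
        + (β t / (t * σ t ^ 2)) * (inner ℝ y x : ℝ)) := by
  unfold interpWeight
  congr 1
  field_simp

lemma iw_cont {d : ℕ} (β σ : ℝ → ℝ) (t : ℝ) (x : EuclideanSpace ℝ (Fin d)) :
    Continuous (fun y => interpWeight β σ t x y) := by
  unfold interpWeight
  exact Real.continuous_exp.comp <| ((((continuous_const.mul ((continuous_norm.pow 2))).div_const _)).add
    ((continuous_const.mul (continuous_id.inner continuous_const)).div_const _))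

lemma iw_pos {d : ℕ} (β σ : ℝ → ℝ) (t : ℝ) (x y : EuclideanSpace ℝ (Fin d)) :
    0 < interpWeight β σ t x y := Real.exp_pos _

lemma iw_rel {d : ℕ} (β σ : ℝ → ℝ) (t : ℝ) (ht : t ≠ 0) (hσt : σ t ≠ 0)
    (x x' y : EuclideanSpace ℝ (Fin d)) :
    interpWeight β σ t x y = interpWeight β σ t x' y *
      Real.exp ((β t / (t * σ t ^ 2)) * (inner ℝ y (x - x') : ℝ)) := by
  rw [iw_eq β σ t ht hσt, iw_eq β σ t ht hσt, ← Real.exp_add, inner_sub_right]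
  congr 1
  ring

variable {d : ℕ} {ρ : EuclideanSpace ℝ (Fin d) → ℝ} {β σ : ℝ → ℝ} {t : ℝ} {R : ℝ}

lemma supp_norm (hsupp : Function.support ρ ⊆ Metric.closedBall 0 R)
    {y : EuclideanSpace ℝ (Fin d)} (hy : ρ y ≠ 0) : ‖y‖ ≤ R := by
  have := hsupp (Function.mem_support.2 hy)
  simpa [Metric.mem_closedBall, dist_zero_right] using this

lemma rho_integrable (hρ1 : ∫ y, ρ y = 1) : Integrable ρ := by
  by_contra h
  rw [MeasureTheory.integral_undef h] at hρ1
  norm_num at hρ1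

lemma inner_le_R (hsupp : Function.support ρ ⊆ Metric.closedBall 0 R)
    (x : EuclideanSpace ℝ (Fin d)) {y : EuclideanSpace ℝ (Fin d)} (hy : ρ y ≠ 0) :
    |(inner ℝ y x : ℝ)| ≤ R * ‖x‖ := by
  refine le_trans (abs_real_inner_le_norm y x) ?_
  exact mul_le_mul_of_nonneg_right (supp_norm hsupp hy) (norm_nonneg x)

section main
variable (ht : 0 < t) (hσt : 0 < σ t) (hβt : 0 < β t)
  (hρnn : ∀ y, 0 ≤ ρ y) (hρ1 : ∫ y, ρ y = 1) (hR : 0 ≤ R)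
  (hsupp : Function.support ρ ⊆ Metric.closedBall 0 R)

include ht hσt hβt hρnn hρ1 hR hsupp

lemma iw_le (x : EuclideanSpace ℝ (Fin d)) {y : EuclideanSpace ℝ (Fin d)} (hy : ρ y ≠ 0) :
    interpWeight β σ t x y ≤ Real.exp ((β t / (t * σ t ^ 2)) * R * ‖x‖) := by
  rw [iw_eq β σ t ht.ne' hσt.ne']
  apply Real.exp_le_exp.2
  have h1 : -(β t) ^ 2 * ‖y‖ ^ 2 / (2 * t * σ t ^ 2) ≤ 0 := by
    apply div_nonpos_of_nonpos_of_nonneg (by nlinarith [sq_nonneg (β t * ‖y‖)]) (by positivity)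
  have h2 : (inner ℝ y x : ℝ) ≤ ‖y‖ * ‖x‖ := real_inner_le_norm y x
  have hc : 0 < β t / (t * σ t ^ 2) := by positivity
  have hyR := supp_norm hsupp hy
  have h3 : β t / (t * σ t ^ 2) * (‖y‖ * ‖x‖) ≤ β t / (t * σ t ^ 2) * (R * ‖x‖) :=
    mul_le_mul_of_nonneg_left (mul_le_mul_of_nonneg_right hyR (norm_nonneg x)) hc.le
  linarith [mul_le_mul_of_nonneg_left h2 hc.le]

lemma W_integrable (x : EuclideanSpace ℝ (Fin d)) :
    Integrable (fun y => ρ y * interpWeight β σ t x y) := by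
  have hρint := rho_integrable hρ1
  refine Integrable.mono' (hρint.const_mul (Real.exp ((β t / (t * σ t ^ 2)) * R * ‖x‖)))
    (hρint.aestronglyMeasurable.mul (iw_cont β σ t x).aestronglyMeasurable) ?_
  filter_upwards with y
  by_cases hy : ρ y = 0
  · simp [hy]
  · rw [Real.norm_eq_abs, abs_of_nonneg (mul_nonneg (hρnn y) (iw_pos β σ t x y).le)]
    rw [mul_comm (Real.exp _)]
    exact mul_le_mul_of_nonneg_left (iw_le ht hσt hβt hρnn hρ1 hR hsupp x hy) (hρnn y)

lemma F_integrable (x : EuclideanSpace ℝ (Fin d)) :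
    Integrable (fun y => (ρ y * interpWeight β σ t x y) • y) := by
  have hρint := rho_integrable hρ1
  refine Integrable.mono' (hρint.const_mul (R * Real.exp ((β t / (t * σ t ^ 2)) * R * ‖x‖)))
    ((hρint.aestronglyMeasurable.mul
      (iw_cont β σ t x).aestronglyMeasurable).smul aestronglyMeasurable_id) ?_
  filter_upwards with y
  by_cases hy : ρ y = 0
  · simp [hy]
  · rw [norm_smul, Real.norm_eq_abs, abs_of_nonneg (mul_nonneg (hρnn y) (iw_pos β σ t x y).le)]
    have h1 := iw_le ht hσt hβt hρnn hρ1 hR hsupp x hy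
    have h2 := supp_norm hsupp hy
    have := hρnn y
    have h3 := mul_le_mul h1 h2 (norm_nonneg y) (Real.exp_pos _).le
    have h4 := mul_le_mul_of_nonneg_left h3 (hρnn y)
    nlinarith


lemma Z_pos (x : EuclideanSpace ℝ (Fin d)) :
    0 < ∫ y, ρ y * interpWeight β σ t x y := by
  have hρint := rho_integrable hρ1
  set L := -(β t) ^ 2 * R ^ 2 / (2 * t * σ t ^ 2) - (β t / (t * σ t ^ 2)) * (R * ‖x‖) with hL
  have hpt : ∀ y, Real.exp L * ρ y ≤ ρ y * interpWeight β σ t x y := by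
    intro y
    by_cases hy : ρ y = 0
    · simp [hy]
    · have hwL : Real.exp L ≤ interpWeight β σ t x y := by
        rw [iw_eq β σ t ht.ne' hσt.ne']
        apply Real.exp_le_exp.2
        have hc : (0:ℝ) < β t / (t * σ t ^ 2) := by positivity
        have hyR := supp_norm hsupp hy
        have h1 : -(β t) ^ 2 * R ^ 2 / (2 * t * σ t ^ 2) ≤
            -(β t) ^ 2 * ‖y‖ ^ 2 / (2 * t * σ t ^ 2) := by
          apply div_le_div_of_nonneg_right ?_ (by positivity)
          nlinarith [sq_nonneg (β t), mul_le_mul hyR hyR (norm_nonneg y) hR, norm_nonneg y]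
        have h2 := inner_le_R hsupp x hy
        have h3 : -(β t / (t * σ t ^ 2) * (R * ‖x‖)) ≤ β t / (t * σ t ^ 2) * (inner ℝ y x : ℝ) := by
          nlinarith [abs_nonneg (inner ℝ y x : ℝ), neg_abs_le (inner ℝ y x : ℝ),
            mul_le_mul_of_nonneg_left h2 hc.le,
            mul_le_mul_of_nonneg_left (neg_abs_le (inner ℝ y x : ℝ)) hc.le]
        rw [hL]; linarith
      calc Real.exp L * ρ y ≤ interpWeight β σ t x y * ρ y :=
            mul_le_mul_of_nonneg_right hwL (hρnn y)
        _ = ρ y * interpWeight β σ t x y := by ring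
  calc (0:ℝ) < Real.exp L := Real.exp_pos L
    _ = Real.exp L * ∫ y, ρ y := by rw [hρ1, mul_one]
    _ = ∫ y, Real.exp L * ρ y := by rw [integral_const_mul]
    _ ≤ ∫ y, ρ y * interpWeight β σ t x y :=
        integral_mono (hρint.const_mul _) (W_integrable ht hσt hβt hρnn hρ1 hR hsupp x) hpt

lemma Z_le (x x' : EuclideanSpace ℝ (Fin d)) :
    (∫ y, ρ y * interpWeight β σ t x y) ≤
      Real.exp ((β t / (t * σ t ^ 2)) * R * ‖x - x'‖) * ∫ y, ρ y * interpWeight β σ t x' y := by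
  rw [← integral_const_mul]
  apply integral_mono (W_integrable ht hσt hβt hρnn hρ1 hR hsupp x)
    ((W_integrable ht hσt hβt hρnn hρ1 hR hsupp x').const_mul _)
  intro y
  by_cases hy : ρ y = 0
  · simp [hy]
  · have hc : (0:ℝ) < β t / (t * σ t ^ 2) := by positivity
    have h2 := inner_le_R hsupp (x - x') hy
    have hexp : Real.exp ((β t / (t * σ t ^ 2)) * (inner ℝ y (x - x') : ℝ)) ≤
        Real.exp ((β t / (t * σ t ^ 2)) * R * ‖x - x'‖) := by
      apply Real.exp_le_exp.2
      calc (β t / (t * σ t ^ 2)) * (inner ℝ y (x - x') : ℝ)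
          ≤ (β t / (t * σ t ^ 2)) * |(inner ℝ y (x - x') : ℝ)| :=
            mul_le_mul_of_nonneg_left (le_abs_self _) hc.le
        _ ≤ (β t / (t * σ t ^ 2)) * (R * ‖x - x'‖) := mul_le_mul_of_nonneg_left h2 hc.le
        _ = (β t / (t * σ t ^ 2)) * R * ‖x - x'‖ := by ring
    calc ρ y * interpWeight β σ t x y
        = ρ y * (interpWeight β σ t x' y * Real.exp ((β t / (t * σ t ^ 2)) * (inner ℝ y (x - x') : ℝ))) := by
          rw [← iw_rel β σ t ht.ne' hσt.ne']
      _ ≤ ρ y * (interpWeight β σ t x' y * Real.exp ((β t / (t * σ t ^ 2)) * R * ‖x - x'‖)) := by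
          apply mul_le_mul_of_nonneg_left ?_ (hρnn y)
          exact mul_le_mul_of_nonneg_left hexp (iw_pos β σ t x' y).le
      _ = Real.exp ((β t / (t * σ t ^ 2)) * R * ‖x - x'‖) * (ρ y * interpWeight β σ t x' y) := by ring

lemma Wdiff_bound (x x' : EuclideanSpace ℝ (Fin d)) (y : EuclideanSpace ℝ (Fin d)) :
    |ρ y * interpWeight β σ t x y - ρ y * interpWeight β σ t x' y| ≤
      ((β t / (t * σ t ^ 2)) * R * ‖x - x'‖) *
        Real.exp ((β t / (t * σ t ^ 2)) * R * ‖x - x'‖) *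
        (ρ y * interpWeight β σ t x' y) := by
  set c := β t / (t * σ t ^ 2) with hcdef
  have hc : (0:ℝ) < c := by positivity
  by_cases hy : ρ y = 0
  · simp [hy]
  · set a := c * (inner ℝ y (x - x') : ℝ) with ha
    have hab : |a| ≤ c * R * ‖x - x'‖ := by
      rw [ha, abs_mul, abs_of_nonneg hc.le]
      calc c * |(inner ℝ y (x - x') : ℝ)| ≤ c * (R * ‖x - x'‖) :=
            mul_le_mul_of_nonneg_left (inner_le_R hsupp (x - x') hy) hc.le
        _ = c * R * ‖x - x'‖ := by ring
    have h1 : |Real.exp a - 1| ≤ (c * R * ‖x - x'‖) * Real.exp (c * R * ‖x - x'‖) := by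
      refine le_trans (abs_exp_sub_one_le' a) ?_
      have h2 : Real.exp |a| ≤ Real.exp (c * R * ‖x - x'‖) := Real.exp_le_exp.2 hab
      exact mul_le_mul hab h2 (Real.exp_pos _).le (by positivity)
    have heq : ρ y * interpWeight β σ t x y - ρ y * interpWeight β σ t x' y =
        (ρ y * interpWeight β σ t x' y) * (Real.exp a - 1) := by
      rw [iw_rel β σ t ht.ne' hσt.ne' x x' y, ha, hcdef]; ring
    rw [heq, abs_mul, abs_of_nonneg (mul_nonneg (hρnn y) (iw_pos β σ t x' y).le)]
    calc (ρ y * interpWeight β σ t x' y) * |Real.exp a - 1|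
        ≤ (ρ y * interpWeight β σ t x' y) * ((c * R * ‖x - x'‖) * Real.exp (c * R * ‖x - x'‖)) :=
          mul_le_mul_of_nonneg_left h1 (mul_nonneg (hρnn y) (iw_pos β σ t x' y).le)
      _ = (c * R * ‖x - x'‖) * Real.exp (c * R * ‖x - x'‖) * (ρ y * interpWeight β σ t x' y) := by
          ring

lemma Z_diff (x x' : EuclideanSpace ℝ (Fin d)) :
    |(∫ y, ρ y * interpWeight β σ t x y) - ∫ y, ρ y * interpWeight β σ t x' y| ≤
      ((β t / (t * σ t ^ 2)) * R * ‖x - x'‖) *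
        Real.exp ((β t / (t * σ t ^ 2)) * R * ‖x - x'‖) *
        ∫ y, ρ y * interpWeight β σ t x' y := by
  set c := β t / (t * σ t ^ 2) with hcdef
  rw [← integral_sub (W_integrable ht hσt hβt hρnn hρ1 hR hsupp x)
      (W_integrable ht hσt hβt hρnn hρ1 hR hsupp x'), ← integral_const_mul, ← Real.norm_eq_abs]
  apply norm_integral_le_of_norm_le
  · exact (W_integrable ht hσt hβt hρnn hρ1 hR hsupp x').const_mul _
  · filter_upwards with y
    rw [Real.norm_eq_abs]
    calc |ρ y * interpWeight β σ t x y - ρ y * interpWeight β σ t x' y|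
        ≤ (c * R * ‖x - x'‖) * Real.exp (c * R * ‖x - x'‖) * (ρ y * interpWeight β σ t x' y) :=
          Wdiff_bound ht hσt hβt hρnn hρ1 hR hsupp x x' y
      _ = c * R * ‖x - x'‖ * Real.exp (c * R * ‖x - x'‖) * (ρ y * interpWeight β σ t x' y) := by
          ring

lemma F_diff (x x' : EuclideanSpace ℝ (Fin d)) :
    ‖(∫ y, (ρ y * interpWeight β σ t x y) • y) - ∫ y, (ρ y * interpWeight β σ t x' y) • y‖ ≤
      ((β t / (t * σ t ^ 2)) * R * ‖x - x'‖) *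
        Real.exp ((β t / (t * σ t ^ 2)) * R * ‖x - x'‖) * R *
        ∫ y, ρ y * interpWeight β σ t x' y := by
  set c := β t / (t * σ t ^ 2) with hcdef
  have hc : (0:ℝ) < c := by positivity
  rw [← integral_sub (F_integrable ht hσt hβt hρnn hρ1 hR hsupp x)
      (F_integrable ht hσt hβt hρnn hρ1 hR hsupp x')]
  have heq : (fun y => (ρ y * interpWeight β σ t x y) • y - (ρ y * interpWeight β σ t x' y) • y)
      = fun y => (ρ y * interpWeight β σ t x y - ρ y * interpWeight β σ t x' y) • y := by
    funext y; rw [sub_smul]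
  rw [heq, show ((c * R * ‖x - x'‖) * Real.exp (c * R * ‖x - x'‖) * R *
      ∫ y, ρ y * interpWeight β σ t x' y)
      = ∫ y, ((c * R * ‖x - x'‖) * Real.exp (c * R * ‖x - x'‖) * R) *
        (ρ y * interpWeight β σ t x' y) from by rw [integral_const_mul]]
  apply norm_integral_le_of_norm_le
  · exact (W_integrable ht hσt hβt hρnn hρ1 hR hsupp x').const_mul _
  · filter_upwards with y
    rw [norm_smul, Real.norm_eq_abs]
    by_cases hy : ρ y = 0
    · simp [hy]
    · have h1 := Wdiff_bound ht hσt hβt hρnn hρ1 hR hsupp x x' y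
      have h2 := supp_norm hsupp hy
      have h3 : (0:ℝ) ≤ ρ y * interpWeight β σ t x' y :=
        mul_nonneg (hρnn y) (iw_pos β σ t x' y).le
      have h4 : (0:ℝ) ≤ c * R * ‖x - x'‖ * Real.exp (c * R * ‖x - x'‖) := by positivity
      nlinarith [abs_nonneg (ρ y * interpWeight β σ t x y - ρ y * interpWeight β σ t x' y),
        norm_nonneg y, mul_le_mul h1 h2 (norm_nonneg y) (mul_nonneg h4 h3)]

lemma F_norm_le (x : EuclideanSpace ℝ (Fin d)) :
    ‖∫ y, (ρ y * interpWeight β σ t x y) • y‖ ≤ R * ∫ y, ρ y * interpWeight β σ t x y := by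
  rw [← integral_const_mul]
  apply norm_integral_le_of_norm_le ((W_integrable ht hσt hβt hρnn hρ1 hR hsupp x).const_mul _)
  filter_upwards with y
  rw [norm_smul, Real.norm_eq_abs]
  by_cases hy : ρ y = 0
  · simp [hy]
  · have h2 := supp_norm hsupp hy
    have h3 : (0:ℝ) ≤ ρ y * interpWeight β σ t x y :=
      mul_nonneg (hρnn y) (iw_pos β σ t x y).le
    rw [abs_of_nonneg h3]
    nlinarith [norm_nonneg y]

lemma condMean_dist_le (x x' : EuclideanSpace ℝ (Fin d)) :
    ‖condMean ρ β σ t x - condMean ρ β σ t x'‖ ≤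
      2 * (β t / (t * σ t ^ 2)) * R ^ 2 *
        Real.exp (2 * ((β t / (t * σ t ^ 2)) * R * ‖x - x'‖)) * ‖x - x'‖ := by
  set c := β t / (t * σ t ^ 2) with hcdef
  have hc : (0:ℝ) < c := by positivity
  set K := c * R * ‖x - x'‖ with hK
  have hKnn : 0 ≤ K := by positivity
  set Zx := ∫ y, ρ y * interpWeight β σ t x y with hZx
  set Zx' := ∫ y, ρ y * interpWeight β σ t x' y with hZx'
  set Fx := ∫ y, (ρ y * interpWeight β σ t x y) • y with hFx
  set Fx' := ∫ y, (ρ y * interpWeight β σ t x' y) • y with hFx'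
  have hZxpos : 0 < Zx := Z_pos ht hσt hβt hρnn hρ1 hR hsupp x
  have hZx'pos : 0 < Zx' := Z_pos ht hσt hβt hρnn hρ1 hR hsupp x'
  have h1 : ‖Fx - Fx'‖ ≤ K * Real.exp K * R * Zx' :=
    F_diff ht hσt hβt hρnn hρ1 hR hsupp x x'
  have h2 : |Zx' - Zx| ≤ K * Real.exp K * Zx := by
    have := Z_diff ht hσt hβt hρnn hρ1 hR hsupp x' x
    rwa [norm_sub_rev x' x] at this
  have h3 : ‖Fx'‖ ≤ R * Zx' := F_norm_le ht hσt hβt hρnn hρ1 hR hsupp x'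
  have h4 : Zx' ≤ Real.exp K * Zx := by
    have := Z_le ht hσt hβt hρnn hρ1 hR hsupp x' x
    rwa [norm_sub_rev x' x] at this
  have key : condMean ρ β σ t x - condMean ρ β σ t x' =
      Zx⁻¹ • (Fx - Fx') + (Zx⁻¹ - Zx'⁻¹) • Fx' := by
    simp only [condMean, ← hZx, ← hZx', ← hFx, ← hFx']
    module
  rw [key]
  have hE1 : (1:ℝ) ≤ Real.exp K := Real.one_le_exp hKnn
  have t1 : ‖Zx⁻¹ • (Fx - Fx')‖ ≤ K * R * Real.exp K * Real.exp K := by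
    rw [norm_smul, Real.norm_eq_abs, abs_of_pos (inv_pos.2 hZxpos)]
    rw [inv_mul_le_iff₀ hZxpos]
    calc ‖Fx - Fx'‖ ≤ K * Real.exp K * R * Zx' := h1
      _ ≤ K * Real.exp K * R * (Real.exp K * Zx) :=
          mul_le_mul_of_nonneg_left h4 (by positivity)
      _ = Zx * (K * R * Real.exp K * Real.exp K) := by ring
  have t2 : ‖(Zx⁻¹ - Zx'⁻¹) • Fx'‖ ≤ K * Real.exp K * R := by
    rw [norm_smul, Real.norm_eq_abs, inv_sub_inv hZxpos.ne' hZx'pos.ne', abs_div,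
      abs_of_pos (mul_pos hZxpos hZx'pos), div_mul_eq_mul_div, div_le_iff₀ (mul_pos hZxpos hZx'pos)]
    calc |Zx' - Zx| * ‖Fx'‖ ≤ (K * Real.exp K * Zx) * (R * Zx') :=
        mul_le_mul h2 h3 (norm_nonneg _) (by positivity)
      _ = K * Real.exp K * R * (Zx * Zx') := by ring
  have hexp2 : Real.exp (2 * K) = Real.exp K * Real.exp K := by
    rw [two_mul, Real.exp_add]
  calc ‖Zx⁻¹ • (Fx - Fx') + (Zx⁻¹ - Zx'⁻¹) • Fx'‖
      ≤ ‖Zx⁻¹ • (Fx - Fx')‖ + ‖(Zx⁻¹ - Zx'⁻¹) • Fx'‖ := norm_add_le _ _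
    _ ≤ K * R * Real.exp K * Real.exp K + K * Real.exp K * R := by linarith
    _ ≤ 2 * c * R ^ 2 * Real.exp (2 * K) * ‖x - x'‖ := by
        rw [hexp2, hK]
        nlinarith [mul_le_mul_of_nonneg_left hE1
          (show (0:ℝ) ≤ c * R * ‖x - x'‖ * R * Real.exp (c * R * ‖x - x'‖) by positivity)]

end main

/-- for targets supported in the closed ball of radius `R`,
`‖∇_x E[x⋆|x_t=x]‖ ≤ 4R² β(t)/(t σ(t)²)` and the corresponding bound on `‖∇_x b_t(x)‖`. -/
theorem jacobian_bounds_bounded_support {d : ℕ} (ρ : EuclideanSpace ℝ (Fin d) → ℝ)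
    (β σ : ℝ → ℝ)
    (hβC : ContDiff ℝ 1 β) (hσC : ContDiff ℝ 1 σ)
    (hβ0 : β 0 = 0) (hβ1 : β 1 = 1) (hσ0 : 0 < σ 0) (hσ1 : σ 1 = 0)
    (hβ' : ∀ t ∈ Icc (0:ℝ) 1, 0 < deriv β t)
    (hσ' : ∀ t ∈ Icc (0:ℝ) 1, deriv σ t < 0)
    (hρnn : ∀ y, 0 ≤ ρ y) (hρ1 : ∫ y, ρ y = 1)
    (R : ℝ) (hR : 0 ≤ R)
    (hsupp : Function.support ρ ⊆ Metric.closedBall 0 R) :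
    ∀ t ∈ Ioo (0:ℝ) 1, ∀ x : EuclideanSpace ℝ (Fin d),
      ‖fderiv ℝ (fun x' => condMean ρ β σ t x') x‖ ≤ 4 * R ^ 2 * β t / (t * σ t ^ 2) ∧
      ‖fderiv ℝ (fun x' => drift ρ β σ t x') x‖ ≤
        |deriv σ t / σ t| +
          4 * R ^ 2 * (β t / (t * σ t ^ 2)) * |deriv β t - β t * deriv σ t / σ t| := by
  intro t htI x
  obtain ⟨ht0, ht1⟩ := htI
  have htIcc : t ∈ Icc (0:ℝ) 1 := ⟨ht0.le, ht1.le⟩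
  have hβ't := hβ' t htIcc
  have hσ't := hσ' t htIcc
  have hβt : 0 < β t := by
    have hmono : StrictMonoOn β (Icc (0:ℝ) 1) :=
      strictMonoOn_of_deriv_pos (convex_Icc 0 1) hβC.continuous.continuousOn
        (fun z hz => hβ' z (by rw [interior_Icc] at hz; exact ⟨hz.1.le, hz.2.le⟩))
    have := hmono (Set.left_mem_Icc.2 zero_le_one) htIcc ht0
    rwa [hβ0] at this
  have hσt : 0 < σ t := by
    have hanti : StrictAntiOn σ (Icc (0:ℝ) 1) :=
      strictAntiOn_of_deriv_neg (convex_Icc 0 1) hσC.continuous.continuousOn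
        (fun z hz => hσ' z (by rw [interior_Icc] at hz; exact ⟨hz.1.le, hz.2.le⟩))
    have := hanti htIcc (Set.right_mem_Icc.2 zero_le_one) ht1
    rwa [hσ1] at this
  set c := β t / (t * σ t ^ 2) with hcdef
  have hc : (0:ℝ) < c := by positivity
  -- eventual Lipschitz bound for condMean
  have hev : ∀ᶠ x' in 𝓝 x, ‖condMean ρ β σ t x' - condMean ρ β σ t x‖ ≤
      (4 * R ^ 2 * β t / (t * σ t ^ 2)) * ‖x' - x‖ := by
    have hεpos : (0:ℝ) < Real.log 2 / (2 * c * R + 1) := by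
      apply div_pos (Real.log_pos one_lt_two); positivity
    filter_upwards [Metric.ball_mem_nhds x hεpos] with x' hx'
    have hd : ‖x' - x‖ < Real.log 2 / (2 * c * R + 1) := by
      rwa [Metric.mem_ball, dist_eq_norm] at hx'
    have hb := condMean_dist_le ht0 hσt hβt hρnn hρ1 hR hsupp x' x
    have harg : 2 * (c * R * ‖x' - x‖) ≤ Real.log 2 := by
      have hcR : (0:ℝ) ≤ 2 * c * R := by positivity
      have h5 : 2 * c * R * ‖x' - x‖ ≤ 2 * c * R * (Real.log 2 / (2 * c * R + 1)) :=
        mul_le_mul_of_nonneg_left hd.le hcR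
      have h6 : 2 * c * R * (Real.log 2 / (2 * c * R + 1)) ≤ Real.log 2 := by
        rw [mul_div_assoc', div_le_iff₀ (by positivity)]
        nlinarith [Real.log_pos one_lt_two]
      nlinarith
    have hexp : Real.exp (2 * (c * R * ‖x' - x‖)) ≤ 2 := by
      calc Real.exp (2 * (c * R * ‖x' - x‖)) ≤ Real.exp (Real.log 2) := Real.exp_le_exp.2 harg
        _ = 2 := Real.exp_log two_pos
    calc ‖condMean ρ β σ t x' - condMean ρ β σ t x‖
        ≤ 2 * c * R ^ 2 * Real.exp (2 * (c * R * ‖x' - x‖)) * ‖x' - x‖ := hb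
      _ ≤ (4 * R ^ 2 * β t / (t * σ t ^ 2)) * ‖x' - x‖ := by
          have h7 : 2 * c * R ^ 2 * Real.exp (2 * (c * R * ‖x' - x‖)) ≤ 2 * c * R ^ 2 * 2 :=
            mul_le_mul_of_nonneg_left hexp (by positivity)
          have h8 : 2 * c * R ^ 2 * 2 = 4 * R ^ 2 * β t / (t * σ t ^ 2) := by
            rw [hcdef]; ring
          nlinarith [norm_nonneg (x' - x),
            mul_le_mul_of_nonneg_right h7 (norm_nonneg (x' - x))]
  constructor
  · by_cases hdiff : DifferentiableAt ℝ (fun x' => condMean ρ β σ t x') x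
    · exact hdiff.hasFDerivAt.le_of_lip' (by positivity) hev
    · rw [fderiv_zero_of_not_differentiableAt hdiff]
      simp only [norm_zero]
      positivity
  · set C := deriv β t - β t * deriv σ t / σ t with hCdef
    have hCpos : 0 < C := by
      have h1 : β t * deriv σ t < 0 := mul_neg_of_pos_of_neg hβt hσ't
      have h2 : β t * deriv σ t / σ t < 0 := div_neg_of_neg_of_pos h1 hσt
      rw [hCdef]; linarith
    have hdid : ∀ z, drift ρ β σ t z =
        (deriv σ t / σ t) • z + C • condMean ρ β σ t z := by
      intro z
      simp only [drift, hCdef]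
      module
    have hev2 : ∀ᶠ x' in 𝓝 x, ‖drift ρ β σ t x' - drift ρ β σ t x‖ ≤
        (|deriv σ t / σ t| +
          4 * R ^ 2 * (β t / (t * σ t ^ 2)) * |deriv β t - β t * deriv σ t / σ t|) * ‖x' - x‖ := by
      filter_upwards [hev] with x' h
      have hsplit : drift ρ β σ t x' - drift ρ β σ t x =
          (deriv σ t / σ t) • (x' - x) + C • (condMean ρ β σ t x' - condMean ρ β σ t x) := by
        rw [hdid x', hdid x]; module
      rw [hsplit]
      calc ‖(deriv σ t / σ t) • (x' - x) + C • (condMean ρ β σ t x' - condMean ρ β σ t x)‖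
          ≤ ‖(deriv σ t / σ t) • (x' - x)‖ + ‖C • (condMean ρ β σ t x' - condMean ρ β σ t x)‖ :=
            norm_add_le _ _
        _ = |deriv σ t / σ t| * ‖x' - x‖ + |C| * ‖condMean ρ β σ t x' - condMean ρ β σ t x‖ := by
            rw [norm_smul, norm_smul, Real.norm_eq_abs, Real.norm_eq_abs]
        _ ≤ |deriv σ t / σ t| * ‖x' - x‖ + |C| * ((4 * R ^ 2 * β t / (t * σ t ^ 2)) * ‖x' - x‖) := by
            have := mul_le_mul_of_nonneg_left h (abs_nonneg C)
            linarith
        _ ≤ (|deriv σ t / σ t| +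
              4 * R ^ 2 * (β t / (t * σ t ^ 2)) * |deriv β t - β t * deriv σ t / σ t|) * ‖x' - x‖ := by
            have h9 : |C| * (4 * R ^ 2 * β t / (t * σ t ^ 2)) =
                4 * R ^ 2 * (β t / (t * σ t ^ 2)) * |deriv β t - β t * deriv σ t / σ t| := by
              rw [hCdef]; ring
            nlinarith [norm_nonneg (x' - x), abs_nonneg C]
    have hCnn : (0:ℝ) ≤ |deriv σ t / σ t| +
        4 * R ^ 2 * (β t / (t * σ t ^ 2)) * |deriv β t - β t * deriv σ t / σ t| := by positivity
    by_cases hdiff : DifferentiableAt ℝ (fun x' => condMean ρ β σ t x') x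
    · have hfun : (fun x' => drift ρ β σ t x') =
          fun z => (deriv σ t / σ t) • z + C • condMean ρ β σ t z := funext hdid
      have hdmap : DifferentiableAt ℝ (fun x' => drift ρ β σ t x') x := by
        rw [hfun]
        exact (differentiableAt_fun_id.fun_const_smul _).fun_add (hdiff.fun_const_smul _)
      exact hdmap.hasFDerivAt.le_of_lip' hCnn hev2
    · have hnd : ¬ DifferentiableAt ℝ (fun x' => drift ρ β σ t x') x := by
        intro hb
        apply hdiff
        have hrepr : (fun x' => condMean ρ β σ t x') =
            fun z => C⁻¹ • (drift ρ β σ t z - (deriv σ t / σ t) • z) := by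
          funext z
          rw [hdid z, add_sub_cancel_left, smul_smul, inv_mul_cancel₀ hCpos.ne', one_smul]
        rw [hrepr]
        exact ((hb.fun_sub (differentiableAt_fun_id.fun_const_smul _)).fun_const_smul _)
      rw [fderiv_zero_of_not_differentiableAt hnd, norm_zero]
      exact hCnn
end
end

section
/- Under the exponential tail bound, for every t ∈ (0,1) the density ρ_t is everywhere positive and differentiable, and its score satisfies ∇ log ρ_t(x) = A(t) (β(t) b_t(x) − β'(t) x) for all x ∈ ℝᵈ, where A(t) = (t σ(t) (β'(t)σ(t) − β(t)σ'(t)))^{−1}; moreover A(t) > 0 for all t ∈ (0,1). -/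
open MeasureTheory Real Filter Set
open scoped Topology

noncomputable section

/-- The marginal density `ρ_t` of the stochastic interpolant. -/
def marginalDensity {d : ℕ} (ρ : EuclideanSpace ℝ (Fin d) → ℝ) (β σ : ℝ → ℝ) (t : ℝ)
    (x : EuclideanSpace ℝ (Fin d)) : ℝ :=
  (2 * Real.pi * t * σ t ^ 2) ^ (-(d : ℝ) / 2) *
    ∫ y, Real.exp (-‖x - β t • y‖ ^ 2 / (2 * t * σ t ^ 2)) * ρ y


lemma exp_poly_bound (C₁ : ℝ) (hC₁ : 0 < C₁) (n : ℕ) :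
    ∃ K : ℝ, 0 < K ∧ ∀ u : ℝ, 0 ≤ u → Real.exp (-C₁ * u) * (1 + u) ^ n ≤ K := by
  set ε : ℝ := min (C₁ / n.succ) 1 with hε
  have hε0 : 0 < ε := lt_min (by positivity) one_pos
  have hε1 : ε ≤ 1 := min_le_right _ _
  refine ⟨ε⁻¹ ^ n, by positivity, fun u hu => ?_⟩
  have h1 : 1 + u ≤ ε⁻¹ * Real.exp (ε * u) := by
    have h2 : ε * (1 + u) ≤ 1 + ε * u := by nlinarith
    calc 1 + u = ε⁻¹ * (ε * (1 + u)) := by field_simp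
    _ ≤ ε⁻¹ * (1 + ε * u) := by nlinarith [inv_pos.mpr hε0]
    _ ≤ ε⁻¹ * Real.exp (ε * u) := by nlinarith [inv_pos.mpr hε0, Real.add_one_le_exp (ε * u)]
  have h4 : (1 + u) ^ n ≤ (ε⁻¹ * Real.exp (ε * u)) ^ n :=
    pow_le_pow_left₀ (by linarith) h1 n
  have h5 : (ε⁻¹ * Real.exp (ε * u)) ^ n = ε⁻¹ ^ n * Real.exp (n * (ε * u)) := by
    rw [mul_pow, ← Real.exp_nat_mul]
  have h6 : (n : ℝ) * (ε * u) ≤ C₁ * u := by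
    have : (n:ℝ) * ε ≤ C₁ := by
      have : ε ≤ C₁ / n.succ := min_le_left _ _
      have hn : (n:ℝ) ≤ n.succ := by exact_mod_cast Nat.le_succ n
      calc (n:ℝ) * ε ≤ (n.succ : ℝ) * (C₁ / n.succ) := by
            apply mul_le_mul hn this hε0.le (by positivity)
      _ = C₁ := by field_simp
    nlinarith
  calc Real.exp (-C₁ * u) * (1 + u) ^ n
      ≤ Real.exp (-C₁ * u) * (ε⁻¹ ^ n * Real.exp (n * (ε * u))) := by
        rw [← h5]; exact mul_le_mul_of_nonneg_left h4 (Real.exp_pos _).le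
    _ = ε⁻¹ ^ n * Real.exp (n * (ε * u) - C₁ * u) := by
        rw [mul_comm (Real.exp _), mul_assoc, ← Real.exp_add]
        ring_nf
    _ ≤ ε⁻¹ ^ n * 1 := by
        apply mul_le_mul_of_nonneg_left _ (by positivity)
        rw [Real.exp_le_one_iff]; linarith
    _ = ε⁻¹ ^ n := mul_one _

lemma tail_integrable {d : ℕ} {ρ : EuclideanSpace ℝ (Fin d) → ℝ}
    (hm : AEStronglyMeasurable ρ volume) (hρnn : ∀ y, 0 ≤ ρ y)
    {C₁ C₂ : ℝ} (hC₁ : 0 < C₁) (hC₂ : 0 < C₂)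
    (htail : ∀ y, ρ y ≤ C₂ * Real.exp (-C₁ * ‖y‖)) :
    Integrable (fun y : EuclideanSpace ℝ (Fin d) => ρ y * ‖y‖) := by
  obtain ⟨K, hK0, hK⟩ := exp_poly_bound C₁ hC₁ (d + 2)
  have hrank : (Module.finrank ℝ (EuclideanSpace ℝ (Fin d)) : ℝ) < (d : ℝ) + 1 := by
    simp [finrank_euclideanSpace_fin]
  have hint : Integrable (fun y : EuclideanSpace ℝ (Fin d) =>
      C₂ * K * (1 + ‖y‖) ^ (-((d : ℝ) + 1))) :=
    (integrable_one_add_norm hrank).const_mul _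
  refine hint.mono' (hm.mul continuous_norm.aestronglyMeasurable) (ae_of_all _ fun y => ?_)
  have hy : (0:ℝ) ≤ ‖y‖ := norm_nonneg y
  have h1 : ‖ρ y * ‖y‖‖ = ρ y * ‖y‖ := abs_of_nonneg (mul_nonneg (hρnn y) hy)
  rw [h1]
  have h2 : ρ y * ‖y‖ ≤ C₂ * Real.exp (-C₁ * ‖y‖) * (1 + ‖y‖) := by
    have := htail y
    nlinarith [Real.exp_pos (-C₁ * ‖y‖), hρnn y]
  have hpow : (1 + ‖y‖) ^ (-((d : ℝ) + 1)) = ((1 + ‖y‖) ^ ((d:ℕ) + 1) : ℝ)⁻¹ := by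
    rw [← Real.rpow_natCast (1 + ‖y‖) (d + 1), ← Real.rpow_neg (by positivity)]
    norm_num
  have h3 : Real.exp (-C₁ * ‖y‖) * (1 + ‖y‖) ≤ K * (1 + ‖y‖) ^ (-((d : ℝ) + 1)) := by
    rw [hpow, ← div_eq_mul_inv]
    have hpos : (0:ℝ) < (1 + ‖y‖) ^ ((d:ℕ) + 1) := by positivity
    rw [le_div_iff₀ hpos]
    have hps : (1 + ‖y‖) ^ ((d:ℕ) + 2) = (1 + ‖y‖) ^ ((d:ℕ) + 1) * (1 + ‖y‖) := pow_succ _ _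
    nlinarith [hK ‖y‖ hy, Real.exp_pos (-C₁ * ‖y‖)]
  calc ρ y * ‖y‖ ≤ C₂ * (Real.exp (-C₁ * ‖y‖) * (1 + ‖y‖)) := by linarith [h2]
    _ ≤ C₂ * (K * (1 + ‖y‖) ^ (-((d : ℝ) + 1))) := by nlinarith
    _ = C₂ * K * (1 + ‖y‖) ^ (-((d : ℝ) + 1)) := by ring

lemma gauss_hasFDerivAt {d : ℕ} (c r : ℝ) (hc : 0 < c) (b x : EuclideanSpace ℝ (Fin d)) :
    HasFDerivAt (fun x' : EuclideanSpace ℝ (Fin d) => Real.exp (-‖x' - b‖ ^ 2 / (2 * c)) * r)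
      (innerSL ℝ (((Real.exp (-‖x - b‖ ^ 2 / (2 * c)) * r) / c) • (b - x))) x := by
  have h2 : HasFDerivAt (fun x' : EuclideanSpace ℝ (Fin d) => ‖x' - b‖ ^ 2)
      (2 • (innerSL ℝ (x - b))) x := by
    simpa using ((hasFDerivAt_id x).sub_const b).norm_sq
  have heq : (fun x' : EuclideanSpace ℝ (Fin d) => -‖x' - b‖ ^ 2 / (2 * c))
      = fun x' => (-(2 * c)⁻¹) * ‖x' - b‖ ^ 2 := by
    funext z; field_simp
  have h3 : HasFDerivAt (fun x' : EuclideanSpace ℝ (Fin d) => -‖x' - b‖ ^ 2 / (2 * c))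
      ((-(2 * c)⁻¹) • (2 • (innerSL ℝ (x - b)))) x := by
    rw [heq]; exact h2.const_mul _
  have h5 := (Real.hasDerivAt_exp (-‖x - b‖ ^ 2 / (2 * c))).comp_hasFDerivAt x h3
  have h6 := h5.mul_const r
  refine h6.congr_fderiv ?_
  ext w
  simp only [ContinuousLinearMap.coe_smul', Pi.smul_apply, innerSL_apply_apply,
    ContinuousLinearMap.smul_apply, smul_eq_mul]
  rw [real_inner_smul_left]
  have : (inner ℝ (b - x) w : ℝ) = -(inner ℝ (x - b) w : ℝ) := by
    rw [← inner_neg_left]; congr 1; abel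
  rw [this]
  field_simp
  try ring

lemma gauss_lin_bound {c : ℝ} (hc : 0 < c) {u : ℝ} (hu : 0 ≤ u) :
    u * Real.exp (-u ^ 2 / (2 * c)) ≤ 2 * Real.sqrt c := by
  have hsc : 0 < Real.sqrt c := Real.sqrt_pos.mpr hc
  have hnd : -u ^ 2 / (2 * c) = -(u ^ 2 / (2 * c)) := by ring
  have he1 : Real.exp (-u ^ 2 / (2 * c)) ≤ 1 := by
    rw [hnd, Real.exp_le_one_iff]
    have : 0 ≤ u ^ 2 / (2 * c) := by positivity
    linarith
  by_cases h : u ≤ Real.sqrt c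
  · nlinarith [Real.exp_pos (-u ^ 2 / (2 * c))]
  · push_neg at h
    have hu0 : 0 < u := lt_trans hsc h
    have hz : 0 < u ^ 2 / (2 * c) := by positivity
    have hle : Real.exp (-u ^ 2 / (2 * c)) ≤ (u ^ 2 / (2 * c))⁻¹ := by
      rw [hnd, Real.exp_neg]
      apply inv_anti₀ hz
      linarith [Real.add_one_le_exp (u ^ 2 / (2 * c))]
    have h2 : u * Real.exp (-u ^ 2 / (2 * c)) ≤ 2 * c / u := by
      have : (u ^ 2 / (2 * c))⁻¹ = 2 * c / u ^ 2 := by field_simp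
      rw [this] at hle
      calc u * Real.exp (-u ^ 2 / (2 * c)) ≤ u * (2 * c / u ^ 2) :=
            mul_le_mul_of_nonneg_left hle hu0.le
        _ = 2 * c / u := by field_simp
    have h3 : 2 * c / u ≤ 2 * c / Real.sqrt c := by
      apply div_le_div_of_nonneg_left (by positivity) hsc h.le
    have h4 : 2 * c / Real.sqrt c = 2 * Real.sqrt c := by
      rw [mul_div_assoc, Real.div_sqrt]
    linarith

lemma score_core {d : ℕ} (ρ : EuclideanSpace ℝ (Fin d) → ℝ) (hρint : Integrable ρ)
    (hρnn : ∀ y, 0 ≤ ρ y)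
    (hItail : Integrable (fun y : EuclideanSpace ℝ (Fin d) => ρ y * ‖y‖))
    (c β0 : ℝ) (hc : 0 < c) (x : EuclideanSpace ℝ (Fin d)) :
    HasFDerivAt (fun x' : EuclideanSpace ℝ (Fin d) =>
        ∫ y, Real.exp (-‖x' - β0 • y‖ ^ 2 / (2 * c)) * ρ y)
      (innerSL ℝ (c⁻¹ • (β0 • (∫ y, (Real.exp (-‖x - β0 • y‖ ^ 2 / (2 * c)) * ρ y) • y)
        - (∫ y, Real.exp (-‖x - β0 • y‖ ^ 2 / (2 * c)) * ρ y) • x))) x := by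
  have hρm := hρint.aestronglyMeasurable
  set G : EuclideanSpace ℝ (Fin d) → EuclideanSpace ℝ (Fin d) → EuclideanSpace ℝ (Fin d) :=
    fun x' y => ((Real.exp (-‖x' - β0 • y‖ ^ 2 / (2 * c)) * ρ y) / c) • (β0 • y - x') with hG
  have hcont : ∀ x' : EuclideanSpace ℝ (Fin d),
      Continuous fun y : EuclideanSpace ℝ (Fin d) =>
        Real.exp (-‖x' - β0 • y‖ ^ 2 / (2 * c)) := by
    intro x'; fun_prop
  have hgm : ∀ x' : EuclideanSpace ℝ (Fin d), AEStronglyMeasurable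
      (fun y : EuclideanSpace ℝ (Fin d) =>
        Real.exp (-‖x' - β0 • y‖ ^ 2 / (2 * c)) * ρ y) volume :=
    fun x' => ((hcont x').aestronglyMeasurable).mul hρm
  have hexp_le_one : ∀ (x' y : EuclideanSpace ℝ (Fin d)),
      Real.exp (-‖x' - β0 • y‖ ^ 2 / (2 * c)) ≤ 1 := by
    intro x' y
    have hnd : -‖x' - β0 • y‖ ^ 2 / (2 * c) = -(‖x' - β0 • y‖ ^ 2 / (2 * c)) := by ring
    rw [hnd, Real.exp_le_one_iff]
    have : 0 ≤ ‖x' - β0 • y‖ ^ 2 / (2 * c) := by positivity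
    linarith
  have hgint : ∀ x' : EuclideanSpace ℝ (Fin d), Integrable
      (fun y : EuclideanSpace ℝ (Fin d) =>
        Real.exp (-‖x' - β0 • y‖ ^ 2 / (2 * c)) * ρ y) := by
    intro x'
    refine hρint.mono' (hgm x') (ae_of_all _ fun y => ?_)
    have h0 : 0 ≤ Real.exp (-‖x' - β0 • y‖ ^ 2 / (2 * c)) * ρ y :=
      mul_nonneg (Real.exp_pos _).le (hρnn y)
    rw [Real.norm_eq_abs, abs_of_nonneg h0]
    nlinarith [hexp_le_one x' y, hρnn y, Real.exp_pos (-‖x' - β0 • y‖ ^ 2 / (2 * c))]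
  have hgyint : Integrable
      (fun y : EuclideanSpace ℝ (Fin d) =>
        (Real.exp (-‖x - β0 • y‖ ^ 2 / (2 * c)) * ρ y) • y) := by
    refine hItail.mono' ((hgm x).smul aestronglyMeasurable_id) (ae_of_all _ fun y => ?_)
    rw [norm_smul, Real.norm_eq_abs,
      abs_of_nonneg (mul_nonneg (Real.exp_pos _).le (hρnn y))]
    nlinarith [hρnn y, norm_nonneg y,
      mul_nonneg (sub_nonneg.mpr (hexp_le_one x y)) (mul_nonneg (hρnn y) (norm_nonneg y)),
      Real.exp_pos (-‖x - β0 • y‖ ^ 2 / (2 * c))]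
  have hGm : AEStronglyMeasurable (fun y => G x y) volume := by
    refine AEStronglyMeasurable.smul (𝕜 := ℝ) ?_
      (((continuous_id (X := EuclideanSpace ℝ (Fin d))).const_smul β0).sub continuous_const).aestronglyMeasurable
    simpa [div_eq_mul_inv] using (hgm x).fun_mul aestronglyMeasurable_const
  have hGnorm : ∀ (x' y : EuclideanSpace ℝ (Fin d)),
      ‖G x' y‖ = (Real.exp (-‖x' - β0 • y‖ ^ 2 / (2 * c)) * ρ y * ‖β0 • y - x'‖) / c := by
    intro x' y
    rw [hG]
    simp only []
    rw [norm_smul, Real.norm_eq_abs, abs_of_nonneg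
      (div_nonneg (mul_nonneg (Real.exp_pos _).le (hρnn y)) hc.le)]
    ring
  have hGint : Integrable (fun y => G x y) := by
    refine ((hItail.const_mul (|β0| / c)).add (hρint.const_mul (‖x‖ / c))).mono'
      hGm (ae_of_all _ fun y => ?_)
    set e := Real.exp (-‖x - β0 • y‖ ^ 2 / (2 * c)) with he
    have e0 : (0:ℝ) < e := Real.exp_pos _
    have h1 : ‖β0 • y - x‖ ≤ |β0| * ‖y‖ + ‖x‖ := by
      calc ‖β0 • y - x‖ ≤ ‖β0 • y‖ + ‖x‖ := norm_sub_le _ _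
        _ = |β0| * ‖y‖ + ‖x‖ := by rw [norm_smul, Real.norm_eq_abs]
    have key : e * ρ y * ‖β0 • y - x‖ ≤ ρ y * (|β0| * ‖y‖ + ‖x‖) := by
      have k1 : e * ρ y * ‖β0 • y - x‖ ≤ ρ y * ‖β0 • y - x‖ := by
        nlinarith [mul_nonneg (sub_nonneg.mpr (hexp_le_one x y))
          (mul_nonneg (hρnn y) (norm_nonneg (β0 • y - x)))]
      have k2 : ρ y * ‖β0 • y - x‖ ≤ ρ y * (|β0| * ‖y‖ + ‖x‖) :=
        mul_le_mul_of_nonneg_left h1 (hρnn y)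
      linarith
    calc ‖G x y‖ = (e * ρ y * ‖β0 • y - x‖) / c := hGnorm x y
      _ ≤ (ρ y * (|β0| * ‖y‖ + ‖x‖)) / c := by gcongr
      _ = |β0| / c * (ρ y * ‖y‖) + ‖x‖ / c * ρ y := by ring
  have main : HasFDerivAt (fun x' : EuclideanSpace ℝ (Fin d) =>
      ∫ y, Real.exp (-‖x' - β0 • y‖ ^ 2 / (2 * c)) * ρ y)
      (∫ y, innerSL ℝ (G x y)) x := by
    apply hasFDerivAt_integral_of_dominated_of_fderiv_le
      (F' := fun x' y => innerSL ℝ (G x' y))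
      (bound := fun y => (2 * Real.sqrt c / c) * ρ y) (s := Metric.ball x 1) (Metric.ball_mem_nhds x one_pos)
    · exact Eventually.of_forall fun x' => hgm x'
    · exact hgint x
    · exact (innerSL ℝ).continuous.comp_aestronglyMeasurable hGm
    · refine ae_of_all _ fun y x' _ => ?_
      rw [innerSL_apply_norm, hGnorm x' y]
      set e := Real.exp (-‖x' - β0 • y‖ ^ 2 / (2 * c)) with he
      have e0 : (0:ℝ) < e := Real.exp_pos _
      have hrev : ‖β0 • y - x'‖ = ‖x' - β0 • y‖ := norm_sub_rev _ _
      have hgl : ‖x' - β0 • y‖ * e ≤ 2 * Real.sqrt c :=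
        gauss_lin_bound hc (norm_nonneg _)
      have key : e * ρ y * ‖β0 • y - x'‖ ≤ 2 * Real.sqrt c * ρ y := by
        rw [hrev]
        nlinarith [hρnn y, mul_le_mul_of_nonneg_left hgl (hρnn y)]
      calc (e * ρ y * ‖β0 • y - x'‖) / c ≤ (2 * Real.sqrt c * ρ y) / c := by gcongr
        _ = 2 * Real.sqrt c / c * ρ y := by ring
    · exact hρint.const_mul _
    · refine ae_of_all _ fun y x' _ => ?_
      exact gauss_hasFDerivAt c (ρ y) hc (β0 • y) x'
  have hswap : (∫ y, innerSL ℝ (G x y)) = innerSL ℝ (∫ y, G x y) :=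
    ContinuousLinearMap.integral_comp_comm (innerSL ℝ) hGint
  rw [hswap] at main
  convert main using 3
  have hpt : ∀ y : EuclideanSpace ℝ (Fin d), G x y
      = c⁻¹ • (β0 • ((Real.exp (-‖x - β0 • y‖ ^ 2 / (2 * c)) * ρ y) • y)
        - (Real.exp (-‖x - β0 • y‖ ^ 2 / (2 * c)) * ρ y) • x) := by
    intro y
    rw [hG]
    simp only [smul_sub, smul_smul]
    rw [div_eq_mul_inv]
    module
  calc c⁻¹ • (β0 • (∫ y, (Real.exp (-‖x - β0 • y‖ ^ 2 / (2 * c)) * ρ y) • y)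
        - (∫ y, Real.exp (-‖x - β0 • y‖ ^ 2 / (2 * c)) * ρ y) • x)
      = ∫ y, c⁻¹ • (β0 • ((Real.exp (-‖x - β0 • y‖ ^ 2 / (2 * c)) * ρ y) • y)
        - (Real.exp (-‖x - β0 • y‖ ^ 2 / (2 * c)) * ρ y) • x) := by
        have hsm : Integrable (fun y : EuclideanSpace ℝ (Fin d) =>
            β0 • ((Real.exp (-‖x - β0 • y‖ ^ 2 / (2 * c)) * ρ y) • y)) volume := by
          exact hgyint.smul β0
        rw [integral_smul, integral_sub hsm ((hgint x).smul_const x),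
          integral_smul, integral_smul_const]
    _ = ∫ y, G x y := by
        congr 1; funext y; rw [hpt y]

/-- under the exponential tail bound, `ρ_t` is positive and differentiable and its
score satisfies `∇ log ρ_t(x) = A(t)(β(t) b_t(x) − β'(t) x)` with
`A(t) = (t σ(t)(β'(t)σ(t) − β(t)σ'(t)))⁻¹ > 0`. -/
theorem score_formula {d : ℕ} (ρ : EuclideanSpace ℝ (Fin d) → ℝ) (β σ : ℝ → ℝ)
    (hβC : ContDiff ℝ 1 β) (hσC : ContDiff ℝ 1 σ)
    (hβ0 : β 0 = 0) (hβ1 : β 1 = 1) (hσ0 : 0 < σ 0) (hσ1 : σ 1 = 0)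
    (hβ' : ∀ t ∈ Icc (0:ℝ) 1, 0 < deriv β t)
    (hσ' : ∀ t ∈ Icc (0:ℝ) 1, deriv σ t < 0)
    (hρnn : ∀ y, 0 ≤ ρ y) (hρ1 : ∫ y, ρ y = 1)
    (C₁ C₂ : ℝ) (hC₁ : 0 < C₁) (hC₂ : 0 < C₂)
    (htail : ∀ y, ρ y ≤ C₂ * Real.exp (-C₁ * ‖y‖)) :
    ∀ t ∈ Ioo (0:ℝ) 1,
      0 < (t * σ t * (deriv β t * σ t - β t * deriv σ t))⁻¹ ∧
      ∀ x : EuclideanSpace ℝ (Fin d),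
        0 < marginalDensity ρ β σ t x ∧
        DifferentiableAt ℝ (fun x' => marginalDensity ρ β σ t x') x ∧
        gradient (fun x' => Real.log (marginalDensity ρ β σ t x')) x
          = (t * σ t * (deriv β t * σ t - β t * deriv σ t))⁻¹ •
              (β t • drift ρ β σ t x - deriv β t • x) := by
  intro t ht
  obtain ⟨ht0, ht1⟩ := ht
  have htmem : t ∈ Icc (0:ℝ) 1 := ⟨ht0.le, ht1.le⟩
  have hσt : 0 < σ t := by
    have hanti : StrictAntiOn σ (Icc (0:ℝ) 1) := by
      apply strictAntiOn_of_deriv_neg (convex_Icc 0 1) hσC.continuous.continuousOn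
      intro z hz
      rw [interior_Icc] at hz
      exact hσ' z ⟨hz.1.le, hz.2.le⟩
    have h := hanti htmem (right_mem_Icc.mpr zero_le_one) ht1
    rw [hσ1] at h
    exact h
  have hβt : 0 < β t := by
    have hmono : StrictMonoOn β (Icc (0:ℝ) 1) := by
      apply strictMonoOn_of_deriv_pos (convex_Icc 0 1) hβC.continuous.continuousOn
      intro z hz
      rw [interior_Icc] at hz
      exact hβ' z ⟨hz.1.le, hz.2.le⟩
    have h := hmono (left_mem_Icc.mpr zero_le_one) htmem ht0
    rw [hβ0] at h
    exact h
  have hβ't := hβ' t htmem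
  have hσ't := hσ' t htmem
  have hs : 0 < deriv β t * σ t - β t * deriv σ t := by nlinarith
  refine ⟨inv_pos.mpr (mul_pos (mul_pos ht0 hσt) hs), fun x => ?_⟩
  -- integrability of ρ
  have hρint : Integrable ρ := by
    by_contra h
    rw [integral_undef h] at hρ1
    norm_num at hρ1
  have hρm := hρint.aestronglyMeasurable
  have hItail := tail_integrable hρm hρnn hC₁ hC₂ htail
  set c := t * σ t ^ 2 with hc
  have hc0 : 0 < c := by positivity
  set f : EuclideanSpace ℝ (Fin d) → ℝ :=
    fun x' => ∫ y, Real.exp (-‖x' - β t • y‖ ^ 2 / (2 * c)) * ρ y with hf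
  set K : ℝ := (2 * Real.pi * t * σ t ^ 2) ^ (-(d : ℝ) / 2) with hK
  have hKpos : 0 < K := Real.rpow_pos_of_pos (by positivity) _
  have hmarg : ∀ x', marginalDensity ρ β σ t x' = K * f x' := by
    intro x'
    rw [marginalDensity, hf]
    congr 2
    funext y
    rw [hc]
    ring_nf
  -- positivity of f
  have hgnn : ∀ (x' y : EuclideanSpace ℝ (Fin d)),
      0 ≤ Real.exp (-‖x' - β t • y‖ ^ 2 / (2 * c)) * ρ y :=
    fun x' y => mul_nonneg (Real.exp_pos _).le (hρnn y)
  have hexp_le_one : ∀ (x' y : EuclideanSpace ℝ (Fin d)),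
      Real.exp (-‖x' - β t • y‖ ^ 2 / (2 * c)) ≤ 1 := by
    intro x' y
    have hnd : -‖x' - β t • y‖ ^ 2 / (2 * c) = -(‖x' - β t • y‖ ^ 2 / (2 * c)) := by ring
    rw [hnd, Real.exp_le_one_iff]
    have : 0 ≤ ‖x' - β t • y‖ ^ 2 / (2 * c) := by positivity
    linarith
  have hgm : ∀ x' : EuclideanSpace ℝ (Fin d), AEStronglyMeasurable
      (fun y : EuclideanSpace ℝ (Fin d) =>
        Real.exp (-‖x' - β t • y‖ ^ 2 / (2 * c)) * ρ y) volume := by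
    intro x'
    have : Continuous fun y : EuclideanSpace ℝ (Fin d) =>
        Real.exp (-‖x' - β t • y‖ ^ 2 / (2 * c)) := by fun_prop
    exact this.aestronglyMeasurable.mul hρm
  have hgint : ∀ x' : EuclideanSpace ℝ (Fin d), Integrable
      (fun y : EuclideanSpace ℝ (Fin d) =>
        Real.exp (-‖x' - β t • y‖ ^ 2 / (2 * c)) * ρ y) := by
    intro x'
    refine hρint.mono' (hgm x') (ae_of_all _ fun y => ?_)
    rw [Real.norm_eq_abs, abs_of_nonneg (hgnn x' y)]
    nlinarith [hexp_le_one x' y, hρnn y, Real.exp_pos (-‖x' - β t • y‖ ^ 2 / (2 * c))]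
  have hsupp : 0 < volume (Function.support ρ) := by
    rw [pos_iff_ne_zero]
    intro h0
    have hae : ρ =ᵐ[volume] 0 := by
      rw [Filter.EventuallyEq, ae_iff]
      simpa [Function.support] using h0
    rw [integral_congr_ae hae] at hρ1
    simp at hρ1
  have hfpos : ∀ x', 0 < f x' := by
    intro x'
    rw [hf]
    rw [integral_pos_iff_support_of_nonneg (fun y => hgnn x' y) (hgint x')]
    have hseq : (Function.support fun y : EuclideanSpace ℝ (Fin d) =>
        Real.exp (-‖x' - β t • y‖ ^ 2 / (2 * c)) * ρ y) = Function.support ρ := by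
      ext y
      simp [Function.support, mul_eq_zero, (Real.exp_pos (-‖x' - β t • y‖ ^ 2 / (2 * c))).ne']
    rw [hseq]
    exact hsupp
  -- derivative of f
  set M : EuclideanSpace ℝ (Fin d) :=
    ∫ y, (Real.exp (-‖x - β t • y‖ ^ 2 / (2 * c)) * ρ y) • y with hM
  have hfd : HasFDerivAt f (innerSL ℝ (c⁻¹ • (β t • M - f x • x))) x :=
    score_core ρ hρint hρnn hItail c (β t) hc0 x
  have hdiff : DifferentiableAt ℝ (fun x' => marginalDensity ρ β σ t x') x := by
    have heq : (fun x' => marginalDensity ρ β σ t x') = fun x' => K * f x' := funext hmarg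
    rw [heq]
    exact hfd.differentiableAt.const_mul K
  refine ⟨by rw [hmarg x]; exact mul_pos hKpos (hfpos x), hdiff, ?_⟩
  -- gradient of log
  set v : EuclideanSpace ℝ (Fin d) := c⁻¹ • (β t • M - f x • x) with hv
  have hlog_eq : (fun x' => Real.log (marginalDensity ρ β σ t x'))
      = fun x' => Real.log K + Real.log (f x') := by
    funext x'
    rw [hmarg x', Real.log_mul hKpos.ne' (hfpos x').ne']
  have hfl : HasFDerivAt (fun x' => Real.log (f x')) ((f x)⁻¹ • innerSL ℝ v) x :=
    (Real.hasDerivAt_log (hfpos x).ne').comp_hasFDerivAt x hfd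
  have htd : (InnerProductSpace.toDual ℝ (EuclideanSpace ℝ (Fin d))) ((f x)⁻¹ • v)
      = (f x)⁻¹ • innerSL ℝ v := by
    ext u
    simp [InnerProductSpace.toDual_apply_apply, real_inner_smul_left]
  have hgrad : HasGradientAt (fun x' => Real.log (marginalDensity ρ β σ t x'))
      ((f x)⁻¹ • v) x := by
    rw [hlog_eq, hasGradientAt_iff_hasFDerivAt, htd]
    exact hfl.const_add (Real.log K)
  rw [hgrad.gradient]
  -- now the algebra
  set Z : ℝ := ∫ y, ρ y * interpWeight β σ t x y with hZ
  set Mw : EuclideanSpace ℝ (Fin d) := ∫ y, (ρ y * interpWeight β σ t x y) • y with hMw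
  set E0 : ℝ := Real.exp (-‖x‖ ^ 2 / (2 * c)) with hE0
  have hE0pos : 0 < E0 := Real.exp_pos _
  have hexp_split : ∀ y : EuclideanSpace ℝ (Fin d),
      Real.exp (-‖x - β t • y‖ ^ 2 / (2 * c)) * ρ y
        = E0 * (ρ y * interpWeight β σ t x y) := by
    intro y
    have hexps : -‖x - β t • y‖ ^ 2 / (2 * c) = -‖x‖ ^ 2 / (2 * c) +
        (-β t ^ 2 * ‖y‖ ^ 2 / (2 * t * σ t ^ 2) + β t * (inner ℝ y x : ℝ) / (t * σ t ^ 2)) := by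
      have hns : ‖x - β t • y‖ ^ 2
          = ‖x‖ ^ 2 - 2 * (inner ℝ x (β t • y) : ℝ) + ‖β t • y‖ ^ 2 := norm_sub_sq_real x _
      rw [hns, real_inner_smul_right, norm_smul, Real.norm_eq_abs, mul_pow, sq_abs,
        real_inner_comm x y, hc]
      field_simp
      ring
    calc Real.exp (-‖x - β t • y‖ ^ 2 / (2 * c)) * ρ y
        = Real.exp (-‖x‖ ^ 2 / (2 * c)) * Real.exp (-β t ^ 2 * ‖y‖ ^ 2 / (2 * t * σ t ^ 2)
            + β t * (inner ℝ y x : ℝ) / (t * σ t ^ 2)) * ρ y := by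
          rw [← Real.exp_add, hexps]
      _ = E0 * (ρ y * interpWeight β σ t x y) := by rw [interpWeight, hE0]; ring
  have hfZ : f x = E0 * Z := by
    have heq1 : (fun y : EuclideanSpace ℝ (Fin d) =>
        Real.exp (-‖x - β t • y‖ ^ 2 / (2 * c)) * ρ y)
        = fun y => E0 * (ρ y * interpWeight β σ t x y) := funext hexp_split
    rw [hf]
    show (∫ y, Real.exp (-‖x - β t • y‖ ^ 2 / (2 * c)) * ρ y) = E0 * Z
    rw [heq1, integral_const_mul, hZ]
  have hMsplit : M = E0 • Mw := by
    have heq2 : (fun y : EuclideanSpace ℝ (Fin d) =>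
        (Real.exp (-‖x - β t • y‖ ^ 2 / (2 * c)) * ρ y) • y)
        = fun y => E0 • ((ρ y * interpWeight β σ t x y) • y) := by
      funext y
      rw [hexp_split y, mul_smul]
    rw [hM, heq2, integral_smul, hMw]
  have hcm : condMean ρ β σ t x = Z⁻¹ • Mw := by rw [condMean, hZ, hMw]
  have hfx := hfpos x
  clear_value f K M v Z Mw E0
  have hZpos : 0 < Z := by
    rw [hfZ] at hfx
    rcases mul_pos_iff.mp hfx with ⟨_, h⟩ | ⟨h1, _⟩
    · exact h
    · linarith
  have hMw_m : Mw = Z • condMean ρ β σ t x := by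
    rw [hcm, smul_smul, mul_inv_cancel₀ hZpos.ne', one_smul]
  rw [drift]
  set m : EuclideanSpace ℝ (Fin d) := condMean ρ β σ t x with hm
  clear_value m
  rw [hv, hfZ, hMsplit, hMw_m, hc]
  have hs2 : σ t * deriv β t - β t * deriv σ t ≠ 0 := by nlinarith
  have hs3 : -(β t * deriv σ t) + σ t * deriv β t ≠ 0 := by nlinarith
  match_scalars
  · field_simp
    ring
  · field_simp
    ring
end
end

section
/- Let ρ⋆ be the density of the Gaussian distribution N(m, C) on ℝᵈ, where m ∈ ℝᵈ and C is a symmetric positive definite d×d matrix. Then for every t ∈ (0,1) and x ∈ ℝᵈ: (i) E[x⋆ | x_t = x] = β(t) C (β(t)² C + t σ(t)² I)^{−1} (x − β(t) m) + m; (ii) lim_{t→0⁺} E[x⋆ | x_t = x] = (β'(0)/σ(0)²) C x + m; and (iii) lim_{t→0⁺} b_t(x) = β'(0) m + ((β'(0)²/σ(0)²) C + (σ'(0)/σ(0)) I) x. -/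
open MeasureTheory Set Filter
open scoped Topology

noncomputable section

section Aux
variable {d : ℕ}
local notation "E" => EuclideanSpace ℝ (Fin d)

lemma aux_int1 {b : ℝ} (hb : 0 < b) :
    Integrable (fun v : E => Real.exp (-(b * ‖v‖ ^ 2))) := by
  have h := (GaussianFourier.integrable_cexp_neg_mul_sq_norm_add (V := E)
    (b := (b : ℂ)) (by simpa using hb) 0 0).norm
  refine h.congr ?_
  filter_upwards with v
  rw [Complex.norm_exp]
  congr 1
  simp [← Complex.ofReal_pow]

lemma aux_int2 {b : ℝ} (hb : 0 < b) :
    Integrable (fun v : E => Real.exp (-(b * ‖v‖ ^ 2)) * ‖v‖) := by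
  refine (aux_int1 (half_pos hb)).const_mul (1 + 2 / b) |>.mono ?_ ?_
  · exact (((continuous_const.mul (continuous_norm.pow 2)).neg.rexp.mul continuous_norm)).aestronglyMeasurable
  filter_upwards with v
  have h1 : ‖v‖ ^ 2 * Real.exp (-(b / 2 * ‖v‖ ^ 2)) ≤ 2 / b := by
    have h2 : b / 2 * ‖v‖ ^ 2 ≤ Real.exp (b / 2 * ‖v‖ ^ 2) :=
      le_trans (by linarith [Real.add_one_le_exp (b / 2 * ‖v‖ ^ 2)]) le_rfl
    rw [Real.exp_neg, ← div_eq_mul_inv, div_le_div_iff₀ (Real.exp_pos _) hb]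
    nlinarith [Real.exp_pos (b / 2 * ‖v‖ ^ 2), norm_nonneg v, sq_nonneg ‖v‖]
  have h3 : ‖v‖ * Real.exp (-(b / 2 * ‖v‖ ^ 2)) ≤ 1 + 2 / b := by
    have h4 : Real.exp (-(b / 2 * ‖v‖ ^ 2)) ≤ 1 := by
      rw [Real.exp_le_one_iff]; nlinarith [sq_nonneg ‖v‖]
    nlinarith [Real.exp_pos (-(b / 2 * ‖v‖ ^ 2)), norm_nonneg v,
      sq_nonneg (‖v‖ - 1)]
  have hb2 : Real.exp (-(b * ‖v‖ ^ 2)) = Real.exp (-(b/2 * ‖v‖ ^ 2)) * Real.exp (-(b/2 * ‖v‖ ^ 2)) := by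
    rw [← Real.exp_add]; ring_nf
  rw [Real.norm_eq_abs, Real.norm_eq_abs, abs_of_nonneg (by positivity), abs_of_nonneg (by positivity), hb2]
  calc Real.exp (-(b/2 * ‖v‖ ^ 2)) * Real.exp (-(b/2 * ‖v‖ ^ 2)) * ‖v‖
      = (‖v‖ * Real.exp (-(b / 2 * ‖v‖ ^ 2))) * Real.exp (-(b/2 * ‖v‖ ^ 2)) := by ring
    _ ≤ (1 + 2 / b) * Real.exp (-(b / 2 * ‖v‖ ^ 2)) := by
        apply mul_le_mul_of_nonneg_right h3 (Real.exp_pos _).le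

lemma gauss_core (P : E →L[ℝ] E) {ε : ℝ} (hε : 0 < ε)
    (hP : ∀ v : E, ε * ‖v‖ ^ 2 ≤ (inner ℝ v (P v) : ℝ)) (c : E) :
    (0 < ∫ v : E, Real.exp (-((inner ℝ (v - c) (P (v - c)) : ℝ) / 2))) ∧
    ((∫ v : E, Real.exp (-((inner ℝ (v - c) (P (v - c)) : ℝ) / 2)) • v)
      = (∫ v : E, Real.exp (-((inner ℝ (v - c) (P (v - c)) : ℝ) / 2))) • c) := by
  set h : E → ℝ := fun v => Real.exp (-((inner ℝ v (P v) : ℝ) / 2)) with hh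
  have hcont : Continuous h := by
    apply Real.continuous_exp.comp
    exact ((continuous_id.inner P.continuous).div_const 2).neg
  have hle : ∀ v : E, h v ≤ Real.exp (-(ε / 2 * ‖v‖ ^ 2)) := by
    intro v
    rw [hh, Real.exp_le_exp]
    have := hP v; linarith
  have hInt : Integrable h := by
    refine (aux_int1 (d := d) (half_pos hε)).mono hcont.aestronglyMeasurable ?_
    filter_upwards with v
    rw [Real.norm_eq_abs, Real.norm_eq_abs, abs_of_nonneg (Real.exp_pos _).le,
      abs_of_nonneg (Real.exp_pos _).le]
    exact hle v
  have hIntS : Integrable (fun v : E => h v • v) := by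
    refine (aux_int2 (d := d) (half_pos hε)).mono
      ((hcont.smul continuous_id).aestronglyMeasurable) ?_
    filter_upwards with v
    rw [norm_smul, Real.norm_eq_abs (h v), Real.norm_eq_abs (_ * _),
      abs_of_nonneg (Real.exp_pos _).le,
      abs_of_nonneg (mul_nonneg (Real.exp_pos _).le (norm_nonneg _))]
    exact mul_le_mul_of_nonneg_right (hle v) (norm_nonneg v)
  have hpos : 0 < ∫ v : E, h v := by
    rw [integral_pos_iff_support_of_nonneg (fun v => (Real.exp_pos _).le) hInt]
    have : Function.support h = Set.univ :=
      Set.eq_univ_of_forall fun v => (Real.exp_pos _).ne'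
    rw [this]
    exact isOpen_univ.measure_pos volume ⟨0, trivial⟩
  have heven : ∀ v : E, h (-v) = h v := by
    intro v; simp [hh, inner_neg_neg]
  have hodd : ∫ v : E, h v • v = 0 := by
    have h1 : ∫ v : E, h (-v) • (-v) = ∫ v : E, h v • v :=
      integral_neg_eq_self (fun v : E => h v • v) volume
    have h2 : ∀ v : E, h (-v) • (-v) = -(h v • v) := by
      intro v; rw [heven, smul_neg]
    simp only [h2, integral_neg] at h1
    have h3 : (∫ v : E, h v • v) + ∫ v : E, h v • v = 0 :=
      neg_eq_iff_add_eq_zero.mp h1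
    have h4 : (2 : ℝ) • (∫ v : E, h v • v) = 0 := by rw [two_smul]; exact h3
    rename' h4 => h3
    rcases smul_eq_zero.mp h3 with h4 | h4
    · norm_num at h4
    · exact h4
  have hshift : ∀ f : E → E, Integrable f → True := fun _ _ => trivial
  constructor
  · have : (∫ v : E, Real.exp (-((inner ℝ (v - c) (P (v - c)) : ℝ) / 2)))
        = ∫ v : E, h v := integral_sub_right_eq_self h c
    rw [this]; exact hpos
  · have key : ∀ v : E, Real.exp (-((inner ℝ (v - c) (P (v - c)) : ℝ) / 2)) • v
        = (fun w : E => h w • (w + c)) (v - c) := by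
      intro v; simp [hh]
    calc (∫ v : E, Real.exp (-((inner ℝ (v - c) (P (v - c)) : ℝ) / 2)) • v)
        = ∫ v : E, (fun w : E => h w • (w + c)) (v - c) := by
          exact integral_congr_ae (Filter.Eventually.of_forall key)
      _ = ∫ w : E, h w • (w + c) := integral_sub_right_eq_self (fun w : E => h w • (w + c)) c
      _ = (∫ w : E, h w • w) + ∫ w : E, h w • c := by
          simp_rw [smul_add]
          exact integral_add hIntS (hInt.smul_const c)
      _ = (∫ w : E, h w) • c := by rw [hodd, zero_add, integral_smul_const]
      _ = (∫ v : E, Real.exp (-((inner ℝ (v - c) (P (v - c)) : ℝ) / 2))) • c := by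
          rw [integral_sub_right_eq_self h c]



end Aux

lemma clm_inv_exists {d : ℕ} (T : EuclideanSpace ℝ (Fin d) →L[ℝ] EuclideanSpace ℝ (Fin d))
    (hinj : Function.Injective T) :
    ∃ S : EuclideanSpace ℝ (Fin d) →L[ℝ] EuclideanSpace ℝ (Fin d),
      T.comp S = ContinuousLinearMap.id ℝ _ ∧ S.comp T = ContinuousLinearMap.id ℝ _ := by
  have hsurj : Function.Surjective (T : EuclideanSpace ℝ (Fin d) →ₗ[ℝ] EuclideanSpace ℝ (Fin d)) :=
    (LinearMap.injective_iff_surjective).mp hinj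
  let e : EuclideanSpace ℝ (Fin d) ≃ₗ[ℝ] EuclideanSpace ℝ (Fin d) :=
    LinearEquiv.ofBijective (T : EuclideanSpace ℝ (Fin d) →ₗ[ℝ] EuclideanSpace ℝ (Fin d))
      ⟨hinj, hsurj⟩
  refine ⟨(e.symm : EuclideanSpace ℝ (Fin d) →ₗ[ℝ] EuclideanSpace ℝ (Fin d)).toContinuousLinearMap,
    ?_, ?_⟩
  · refine ContinuousLinearMap.ext fun u => ?_
    exact e.apply_symm_apply u
  · refine ContinuousLinearMap.ext fun u => ?_
    exact e.symm_apply_apply u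



lemma det_pos_of_posdef {d : ℕ}
    (C : EuclideanSpace ℝ (Fin d) →L[ℝ] EuclideanSpace ℝ (Fin d))
    (hCsym : ∀ u v : EuclideanSpace ℝ (Fin d), (inner ℝ (C u) v : ℝ) = (inner ℝ u (C v) : ℝ))
    (hCpos : ∀ u : EuclideanSpace ℝ (Fin d), u ≠ 0 → 0 < (inner ℝ (C u) u : ℝ)) :
    0 < LinearMap.det (C : EuclideanSpace ℝ (Fin d) →ₗ[ℝ] EuclideanSpace ℝ (Fin d)) := by
  set b := (EuclideanSpace.basisFun (Fin d) ℝ).toBasis with hb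
  set A := LinearMap.toMatrix b b (C : EuclideanSpace ℝ (Fin d) →ₗ[ℝ] EuclideanSpace ℝ (Fin d))
    with hA
  have hentry : ∀ i j, A i j = (C (b j)) i := by
    intro i j
    rw [hA, LinearMap.toMatrix_apply]
    rfl
  have hinner : ∀ (u : EuclideanSpace ℝ (Fin d)) (i : Fin d),
      (inner ℝ u (b i) : ℝ) = u i := by
    intro u i
    rw [hb]
    simp [OrthonormalBasis.coe_toBasis, EuclideanSpace.basisFun_apply,
      EuclideanSpace.inner_single_right]
  have hAsym : A.IsHermitian := by
    ext i j
    simp only [Matrix.conjTranspose_apply, star_trivial]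
    rw [hentry j i, hentry i j, ← hinner (C (b i)) j, ← hinner (C (b j)) i,
      hCsym (b i) (b j)]
    exact real_inner_comm _ _
  have hApos : A.PosDef := by
    refine Matrix.PosDef.of_dotProduct_mulVec_pos hAsym fun x hx => ?_
    set v : EuclideanSpace ℝ (Fin d) := (WithLp.equiv 2 _).symm x with hv
    have hvx : ∀ i, v i = x i := fun i => rfl
    have hvsum : ∑ j, x j • b j = v := by
      have := b.sum_repr v
      refine this ▸ Finset.sum_congr rfl fun j _ => ?_
      congr 1
    have hmul : ∀ i, (A.mulVec x) i = (C v) i := by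
      intro i
      have hC : C v = ∑ j, x j • C (b j) := by
        rw [← hvsum, map_sum]
        simp
      rw [Matrix.mulVec, dotProduct, hC]
      rw [show (∑ j, x j • C (b j)) i = ∑ j, x j * (C (b j)) i from by
        rw [← hinner (∑ j, x j • C (b j)) i, sum_inner]
        exact Finset.sum_congr rfl fun j _ => by
          rw [real_inner_smul_left, hinner]]
      exact Finset.sum_congr rfl fun j _ => by rw [hentry i j, mul_comm]
    have hvne : v ≠ 0 := by
      intro h
      apply hx
      ext i
      have := congrArg (fun w : EuclideanSpace ℝ (Fin d) => w i) h
      simpa [hvx] using this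
    have hdot : dotProduct (star x) (A.mulVec x) = (inner ℝ (C v) v : ℝ) := by
      rw [PiLp.inner_apply]
      simp only [RCLike.inner_apply, conj_trivial, dotProduct, Pi.star_apply,
        star_trivial]
      exact Finset.sum_congr rfl fun i _ => by rw [hmul i, hvx i]
    rw [hdot]
    exact hCpos v hvne
  have := hApos.det_pos
  rwa [hA, LinearMap.det_toMatrix] at this


lemma cond_mean_eq {d : ℕ} (β σ : ℝ → ℝ)
    (m : EuclideanSpace ℝ (Fin d))
    (C Cinv : EuclideanSpace ℝ (Fin d) →L[ℝ] EuclideanSpace ℝ (Fin d))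
    (hCsym : ∀ u v : EuclideanSpace ℝ (Fin d), (inner ℝ (C u) v : ℝ) = (inner ℝ u (C v) : ℝ))
    (hCpos : ∀ u : EuclideanSpace ℝ (Fin d), u ≠ 0 → 0 < (inner ℝ (C u) u : ℝ))
    (hCinv1 : C.comp Cinv = ContinuousLinearMap.id ℝ (EuclideanSpace ℝ (Fin d)))
    (hCinv2 : Cinv.comp C = ContinuousLinearMap.id ℝ (EuclideanSpace ℝ (Fin d)))
    (ρ : EuclideanSpace ℝ (Fin d) → ℝ)
    (hρ : ∀ y, ρ y =
      (Real.sqrt ((2 * Real.pi) ^ d *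
          LinearMap.det (C : EuclideanSpace ℝ (Fin d) →ₗ[ℝ] EuclideanSpace ℝ (Fin d))))⁻¹ *
        Real.exp (-(inner ℝ (y - m) (Cinv (y - m)) : ℝ) / 2))
    {t : ℝ} (ht0 : 0 < t) (htσ : 0 < σ t) (htβ : 0 < β t)
    (x : EuclideanSpace ℝ (Fin d))
    (Minv : EuclideanSpace ℝ (Fin d) →L[ℝ] EuclideanSpace ℝ (Fin d))
    (hM1 : ((β t ^ 2) • C + (t * σ t ^ 2) •
        ContinuousLinearMap.id ℝ (EuclideanSpace ℝ (Fin d))).comp Minv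
      = ContinuousLinearMap.id ℝ (EuclideanSpace ℝ (Fin d))) :
    condMean ρ β σ t x = β t • C (Minv (x - β t • m)) + m := by
  set s : ℝ := t * σ t ^ 2 with hs_def
  have hs : 0 < s := by positivity
  set a : ℝ := β t ^ 2 / s with ha_def
  have ha : 0 < a := by positivity
  set r : ℝ := β t / s with hr_def
  set u : EuclideanSpace ℝ (Fin d) := x - β t • m with hu_def
  set w : EuclideanSpace ℝ (Fin d) := Minv u with hw_def
  set c : EuclideanSpace ℝ (Fin d) := β t • C w + m with hc_def
  set P : EuclideanSpace ℝ (Fin d) →L[ℝ] EuclideanSpace ℝ (Fin d) :=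
    Cinv + a • ContinuousLinearMap.id ℝ (EuclideanSpace ℝ (Fin d)) with hP_def
  have hPapp : ∀ z, P z = Cinv z + a • z := fun z => rfl
  -- Cinv symmetric
  have hCinvC : ∀ z, C (Cinv z) = z := fun z => congrArg (fun L => L z) hCinv1
  have hCCinv : ∀ z, Cinv (C z) = z := fun z => congrArg (fun L => L z) hCinv2
  have hCinvsym : ∀ p q : EuclideanSpace ℝ (Fin d),
      (inner ℝ (Cinv p) q : ℝ) = (inner ℝ p (Cinv q) : ℝ) := by
    intro p q
    conv_lhs => rw [← hCinvC q]
    conv_rhs => rw [← hCinvC p]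
    rw [← hCsym (Cinv p) (Cinv q), real_inner_comm]
  have hCinvpos : ∀ z : EuclideanSpace ℝ (Fin d), 0 ≤ (inner ℝ z (Cinv z) : ℝ) := by
    intro z
    rcases eq_or_ne z 0 with h | h
    · simp [h]
    · have hz : Cinv z ≠ 0 := by
        intro hzz
        exact h (by rw [← hCinvC z, hzz, map_zero])
      have := hCpos (Cinv z) hz
      rw [hCinvC z] at this
      rw [real_inner_comm]
      linarith [this, (by rw [real_inner_comm] : (inner ℝ (Cinv z) z : ℝ) = (inner ℝ z (Cinv z) : ℝ))]
  -- symmetry of P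
  have hPsym : ∀ p q : EuclideanSpace ℝ (Fin d), (inner ℝ (P p) q : ℝ) = (inner ℝ p (P q) : ℝ) := by
    intro p q
    rw [hPapp, hPapp, inner_add_left, inner_add_right, hCinvsym,
      real_inner_smul_left, real_inner_smul_right]
  -- lower bound for P
  have hPlb : ∀ v : EuclideanSpace ℝ (Fin d), a * ‖v‖ ^ 2 ≤ (inner ℝ v (P v) : ℝ) := by
    intro v
    rw [hPapp, inner_add_right, real_inner_smul_right, real_inner_self_eq_norm_sq]
    have := hCinvpos v
    linarith
  -- P c = Cinv m + r • x
  have hMu : β t ^ 2 • C w + s • w = u := by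
    have h := ContinuousLinearMap.ext_iff.mp hM1 u
    rw [ContinuousLinearMap.comp_apply, ContinuousLinearMap.add_apply,
      ContinuousLinearMap.smul_apply, ContinuousLinearMap.smul_apply,
      ContinuousLinearMap.id_apply, ContinuousLinearMap.id_apply] at h
    exact h
  rw [hu_def] at hMu
  have hsa : s * a = β t ^ 2 := by rw [ha_def]; field_simp
  have hsr : s * r = β t := by rw [hr_def]; field_simp
  have hPc : P c = Cinv m + r • x := by
    refine smul_right_injective _ hs.ne' ?_
    have h3 := congrArg (fun v : EuclideanSpace ℝ (Fin d) => β t • v) hMu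
    simp only [smul_add, smul_sub, smul_smul] at h3
    rw [hPapp, hc_def]
    simp only [map_add, _root_.map_smul, hCCinv, smul_add, smul_smul]
    linear_combination (norm := module) h3 + (hsa * β t) • C w + hsa • m - hsr • x
  have hdet : 0 < LinearMap.det
      (C : EuclideanSpace ℝ (Fin d) →ₗ[ℝ] EuclideanSpace ℝ (Fin d)) :=
    det_pos_of_posdef C hCsym hCpos
  set Z : ℝ := (Real.sqrt ((2 * Real.pi) ^ d * LinearMap.det
      (C : EuclideanSpace ℝ (Fin d) →ₗ[ℝ] EuclideanSpace ℝ (Fin d))))⁻¹ with hZ_def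
  have hZ : 0 < Z := by
    rw [hZ_def, inv_pos]
    apply Real.sqrt_pos.mpr
    have : (0:ℝ) < 2 * Real.pi := by positivity
    positivity
  set κ : ℝ := (inner ℝ c (P c) : ℝ) / 2 - (inner ℝ m (Cinv m) : ℝ) / 2 with hκ_def
  set K : ℝ := Z * Real.exp κ with hK_def
  have hK : 0 < K := mul_pos hZ (Real.exp_pos _)
  have hpt : ∀ y, ρ y * interpWeight β σ t x y
      = K * Real.exp (-((inner ℝ (y - c) (P (y - c)) : ℝ) / 2)) := by
    intro y
    have hyPy : (inner ℝ y (P y) : ℝ) = (inner ℝ y (Cinv y) : ℝ) + a * ‖y‖ ^ 2 := by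
      rw [hPapp, inner_add_right, real_inner_smul_right, real_inner_self_eq_norm_sq]
    have hyPc : (inner ℝ y (P c) : ℝ) = (inner ℝ y (Cinv m) : ℝ) + r * (inner ℝ y x : ℝ) := by
      rw [hPc, inner_add_right, real_inner_smul_right]
    have hcPy : (inner ℝ c (P y) : ℝ) = (inner ℝ y (Cinv m) : ℝ) + r * (inner ℝ y x : ℝ) := by
      rw [← hPsym c y, real_inner_comm]
      exact hyPc
    have e1 : (inner ℝ (y - c) (P (y - c)) : ℝ)
        = (inner ℝ y (Cinv y) : ℝ) + a * ‖y‖ ^ 2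
          - 2 * ((inner ℝ y (Cinv m) : ℝ) + r * (inner ℝ y x : ℝ)) + (inner ℝ c (P c) : ℝ) := by
      rw [map_sub, inner_sub_left, inner_sub_right, inner_sub_right, hyPy, hyPc, hcPy]
      ring
    have hmy : (inner ℝ m (Cinv y) : ℝ) = (inner ℝ y (Cinv m) : ℝ) := by
      rw [← hCinvsym m y, real_inner_comm]
    have e2 : (inner ℝ (y - m) (Cinv (y - m)) : ℝ)
        = (inner ℝ y (Cinv y) : ℝ) - 2 * (inner ℝ y (Cinv m) : ℝ) + (inner ℝ m (Cinv m) : ℝ) := by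
      rw [map_sub, inner_sub_left, inner_sub_right, inner_sub_right, hmy]
      ring
    have key : -(inner ℝ (y - m) (Cinv (y - m)) : ℝ) / 2
        + (-(β t) ^ 2 * ‖y‖ ^ 2 / (2 * (t * σ t ^ 2))
          + β t * (inner ℝ y x : ℝ) / (t * σ t ^ 2))
        = κ + -((inner ℝ (y - c) (P (y - c)) : ℝ) / 2) := by
      rw [e1, e2, hκ_def, ha_def, hr_def, hs_def]
      have hσne : σ t ≠ 0 := htσ.ne'
      field_simp
      ring
    rw [hρ y, interpWeight, hK_def]
    simp only [mul_assoc, ← Real.exp_add]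
    rw [key]
  obtain ⟨hpos, hmean⟩ := gauss_core P ha hPlb c
  have hI1 : (∫ y, ρ y * interpWeight β σ t x y)
      = K * ∫ v : EuclideanSpace ℝ (Fin d),
          Real.exp (-((inner ℝ (v - c) (P (v - c)) : ℝ) / 2)) := by
    simp_rw [hpt]
    exact integral_const_mul K _
  have hI2 : (∫ y, (ρ y * interpWeight β σ t x y) • y)
      = K • ∫ v : EuclideanSpace ℝ (Fin d),
          Real.exp (-((inner ℝ (v - c) (P (v - c)) : ℝ) / 2)) • v := by
    simp_rw [hpt, mul_smul]
    exact integral_smul K _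
  have hne : K * (∫ v : EuclideanSpace ℝ (Fin d),
      Real.exp (-((inner ℝ (v - c) (P (v - c)) : ℝ) / 2))) ≠ 0 := (mul_pos hK hpos).ne'
  show (∫ y, ρ y * interpWeight β σ t x y)⁻¹ • (∫ y, (ρ y * interpWeight β σ t x y) • y) = c
  rw [hI1, hI2, hmean, smul_smul, smul_smul]
  rw [mul_assoc, inv_mul_cancel₀ hne, one_smul]


set_option maxHeartbeats 2000000 in
/-- for a Gaussian target `N(m, C)`:
(i) `E[x⋆|x_t=x] = β(t) C (β(t)²C + tσ(t)²I)⁻¹ (x − β(t)m) + m`;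
(ii) `E[x⋆|x_t=x] → (β'(0)/σ(0)²) C x + m` as `t → 0⁺`;
(iii) `b_t(x) → β'(0) m + ((β'(0)²/σ(0)²) C + (σ'(0)/σ(0)) I) x` as `t → 0⁺`. -/
theorem gaussian_target_cond_mean {d : ℕ} (β σ : ℝ → ℝ)
    (hβC : ContDiff ℝ 1 β) (hσC : ContDiff ℝ 1 σ)
    (hβ0 : β 0 = 0) (hβ1 : β 1 = 1) (hσ0 : 0 < σ 0) (hσ1 : σ 1 = 0)
    (hβ' : ∀ t ∈ Icc (0:ℝ) 1, 0 < deriv β t)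
    (hσ' : ∀ t ∈ Icc (0:ℝ) 1, deriv σ t < 0)
    (m : EuclideanSpace ℝ (Fin d))
    (C Cinv : EuclideanSpace ℝ (Fin d) →L[ℝ] EuclideanSpace ℝ (Fin d))
    (hCsym : ∀ u v : EuclideanSpace ℝ (Fin d), (inner ℝ (C u) v : ℝ) = (inner ℝ u (C v) : ℝ))
    (hCpos : ∀ u : EuclideanSpace ℝ (Fin d), u ≠ 0 → 0 < (inner ℝ (C u) u : ℝ))
    (hCinv1 : C.comp Cinv = ContinuousLinearMap.id ℝ (EuclideanSpace ℝ (Fin d)))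
    (hCinv2 : Cinv.comp C = ContinuousLinearMap.id ℝ (EuclideanSpace ℝ (Fin d)))
    (ρ : EuclideanSpace ℝ (Fin d) → ℝ)
    (hρ : ∀ y, ρ y =
      (Real.sqrt ((2 * Real.pi) ^ d *
          LinearMap.det (C : EuclideanSpace ℝ (Fin d) →ₗ[ℝ] EuclideanSpace ℝ (Fin d))))⁻¹ *
        Real.exp (-(inner ℝ (y - m) (Cinv (y - m)) : ℝ) / 2)) :
    (∀ t ∈ Ioo (0:ℝ) 1, ∀ x : EuclideanSpace ℝ (Fin d),
      ∃ Minv : EuclideanSpace ℝ (Fin d) →L[ℝ] EuclideanSpace ℝ (Fin d),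
        ((β t ^ 2) • C + (t * σ t ^ 2) •
            ContinuousLinearMap.id ℝ (EuclideanSpace ℝ (Fin d))).comp Minv
          = ContinuousLinearMap.id ℝ (EuclideanSpace ℝ (Fin d)) ∧
        Minv.comp ((β t ^ 2) • C + (t * σ t ^ 2) •
            ContinuousLinearMap.id ℝ (EuclideanSpace ℝ (Fin d)))
          = ContinuousLinearMap.id ℝ (EuclideanSpace ℝ (Fin d)) ∧
        condMean ρ β σ t x = β t • C (Minv (x - β t • m)) + m) ∧
    (∀ x : EuclideanSpace ℝ (Fin d),
      Tendsto (fun t => condMean ρ β σ t x) (𝓝[>] 0)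
        (𝓝 ((deriv β 0 / σ 0 ^ 2) • C x + m))) ∧
    (∀ x : EuclideanSpace ℝ (Fin d),
      Tendsto (fun t => drift ρ β σ t x) (𝓝[>] 0)
        (𝓝 (deriv β 0 • m +
          ((deriv β 0 ^ 2 / σ 0 ^ 2) • C x + (deriv σ 0 / σ 0) • x)))) := by
  -- positivity of β and σ on (0,1)
  have hβmono : StrictMonoOn β (Icc (0:ℝ) 1) := by
    apply strictMonoOn_of_deriv_pos (convex_Icc 0 1) hβC.continuous.continuousOn
    intro z hz
    rw [interior_Icc] at hz
    exact hβ' z ⟨hz.1.le, hz.2.le⟩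
  have hσanti : StrictAntiOn σ (Icc (0:ℝ) 1) := by
    apply strictAntiOn_of_deriv_neg (convex_Icc 0 1) hσC.continuous.continuousOn
    intro z hz
    rw [interior_Icc] at hz
    exact hσ' z ⟨hz.1.le, hz.2.le⟩
  have hβpos : ∀ t ∈ Ioo (0:ℝ) 1, 0 < β t := by
    intro t ht
    have := hβmono ⟨le_rfl, zero_le_one⟩ ⟨ht.1.le, ht.2.le⟩ ht.1
    rwa [hβ0] at this
  have hσpos : ∀ t ∈ Ioo (0:ℝ) 1, 0 < σ t := by
    intro t ht
    have := hσanti ⟨ht.1.le, ht.2.le⟩ ⟨zero_le_one, le_rfl⟩ ht.2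
    rwa [hσ1] at this
  -- part (i)
  have hi : ∀ t ∈ Ioo (0:ℝ) 1, ∀ x : EuclideanSpace ℝ (Fin d),
      ∃ Minv : EuclideanSpace ℝ (Fin d) →L[ℝ] EuclideanSpace ℝ (Fin d),
        ((β t ^ 2) • C + (t * σ t ^ 2) •
            ContinuousLinearMap.id ℝ (EuclideanSpace ℝ (Fin d))).comp Minv
          = ContinuousLinearMap.id ℝ (EuclideanSpace ℝ (Fin d)) ∧
        Minv.comp ((β t ^ 2) • C + (t * σ t ^ 2) •
            ContinuousLinearMap.id ℝ (EuclideanSpace ℝ (Fin d)))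
          = ContinuousLinearMap.id ℝ (EuclideanSpace ℝ (Fin d)) ∧
        condMean ρ β σ t x = β t • C (Minv (x - β t • m)) + m := by
    intro t ht x
    set M : EuclideanSpace ℝ (Fin d) →L[ℝ] EuclideanSpace ℝ (Fin d) :=
      (β t ^ 2) • C + (t * σ t ^ 2) •
        ContinuousLinearMap.id ℝ (EuclideanSpace ℝ (Fin d)) with hM_def
    have hMapp : ∀ v, M v = β t ^ 2 • C v + (t * σ t ^ 2) • v := fun v => rfl
    have hs : 0 < t * σ t ^ 2 := by
      have := hσpos t ht
      have := ht.1
      positivity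
    have hinj : Function.Injective M := by
      intro p q hpq
      by_contra hne
      have hv0 : p - q ≠ 0 := sub_ne_zero.mpr hne
      have hMv : M (p - q) = 0 := by rw [map_sub, hpq, sub_self]
      have h1 : (inner ℝ (p - q) (M (p - q)) : ℝ) = 0 := by rw [hMv, inner_zero_right]
      have hC0 : 0 < (inner ℝ (p - q) (C (p - q)) : ℝ) := by
        rw [real_inner_comm]
        exact hCpos _ hv0
      have h2 : 0 < (inner ℝ (p - q) (M (p - q)) : ℝ) := by
        rw [hMapp, inner_add_right, real_inner_smul_right, real_inner_smul_right,
          real_inner_self_eq_norm_sq]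
        have hnn : 0 < ‖p - q‖ := norm_pos_iff.mpr hv0
        have hn : 0 < ‖p - q‖ ^ 2 := by positivity
        have hb2 : 0 ≤ β t ^ 2 := sq_nonneg _
        nlinarith
      linarith
    obtain ⟨Minv, h1, h2⟩ := clm_inv_exists M hinj
    exact ⟨Minv, h1, h2, cond_mean_eq β σ m C Cinv hCsym hCpos hCinv1 hCinv2 ρ hρ
      ht.1 (hσpos t ht) (hβpos t ht) x Minv h1⟩
  -- common limit facts
  have hq : Tendsto (fun t => β t / t) (𝓝[>] (0:ℝ)) (𝓝 (deriv β 0)) := by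
    have hd : HasDerivAt β (deriv β 0) 0 := ((hβC.differentiable one_ne_zero) 0).hasDerivAt
    rw [hasDerivAt_iff_tendsto_slope] at hd
    have hmono : 𝓝[>] (0:ℝ) ≤ 𝓝[≠] (0:ℝ) :=
      nhdsWithin_mono _ (fun y hy => ne_of_gt hy)
    refine (hd.mono_left hmono).congr fun t => ?_
    rw [slope_def_field, hβ0]
    simp [div_eq_mul_inv]
  have hβ0' : Tendsto β (𝓝[>] (0:ℝ)) (𝓝 0) := by
    have := (hβC.continuous.tendsto 0).mono_left (nhdsWithin_le_nhds (s := Set.Ioi (0:ℝ)))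
    rwa [hβ0] at this
  have hσsq : Tendsto (fun t => σ t ^ 2) (𝓝[>] (0:ℝ)) (𝓝 (σ 0 ^ 2)) :=
    (((hσC.continuous.tendsto 0).mono_left nhdsWithin_le_nhds).pow 2)
  have hσ2ne : σ 0 ^ 2 ≠ 0 := by positivity
  have ha' : Tendsto (fun t => (β t / t) * β t / σ t ^ 2) (𝓝[>] (0:ℝ)) (𝓝 0) := by
    have := (hq.mul hβ0').div hσsq hσ2ne
    rw [mul_zero, zero_div] at this
    exact this
  have hr' : Tendsto (fun t => (β t / t) / σ t ^ 2) (𝓝[>] (0:ℝ))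
      (𝓝 (deriv β 0 / σ 0 ^ 2)) := hq.div hσsq hσ2ne
  -- part (ii)
  have hii : ∀ x : EuclideanSpace ℝ (Fin d),
      Tendsto (fun t => condMean ρ β σ t x) (𝓝[>] 0)
        (𝓝 ((deriv β 0 / σ 0 ^ 2) • C x + m)) := by
    intro x
    have hFeq : ∀ t ∈ Ioo (0:ℝ) 1, condMean ρ β σ t x
        = ((β t / t) / σ t ^ 2) • C ((Ring.inverse
          ((1 : EuclideanSpace ℝ (Fin d) →L[ℝ] EuclideanSpace ℝ (Fin d))
            + ((β t / t) * β t / σ t ^ 2) • C)) (x - β t • m)) + m := by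
      intro t ht
      obtain ⟨Minv, h1, h2, heq⟩ := hi t ht x
      have ht0 : (0:ℝ) < t := ht.1
      have htσ : 0 < σ t := hσpos t ht
      set s : ℝ := t * σ t ^ 2 with hs_def
      have hs : 0 < s := by positivity
      set a' : ℝ := (β t / t) * β t / σ t ^ 2 with ha'_def
      have ha's : a' * s = β t ^ 2 := by
        rw [ha'_def, hs_def]; field_simp
      have hr's : ((β t / t) / σ t ^ 2) * s = β t := by
        rw [hs_def]; field_simp
      have hA : β t ^ 2 • (C.comp Minv) + s • Minv
          = ContinuousLinearMap.id ℝ (EuclideanSpace ℝ (Fin d)) := by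
        have h := h1
        rw [ContinuousLinearMap.add_comp, ContinuousLinearMap.smul_comp,
          ContinuousLinearMap.smul_comp, ContinuousLinearMap.id_comp] at h
        exact h
      have hB : β t ^ 2 • (Minv.comp C) + s • Minv
          = ContinuousLinearMap.id ℝ (EuclideanSpace ℝ (Fin d)) := by
        have h := h2
        rw [ContinuousLinearMap.comp_add, ContinuousLinearMap.comp_smul,
          ContinuousLinearMap.comp_smul, ContinuousLinearMap.comp_id] at h
        exact h
      have hN1 : ((1 : EuclideanSpace ℝ (Fin d) →L[ℝ] EuclideanSpace ℝ (Fin d))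
          + a' • C) * (s • Minv) = 1 := by
        rw [ContinuousLinearMap.mul_def, ContinuousLinearMap.add_comp,
          ContinuousLinearMap.one_def, ContinuousLinearMap.id_comp,
          ContinuousLinearMap.smul_comp, ContinuousLinearMap.comp_smul,
          smul_smul, ha's]
        rw [add_comm]
        exact hA
      have hN2 : (s • Minv) * ((1 : EuclideanSpace ℝ (Fin d) →L[ℝ] EuclideanSpace ℝ (Fin d))
          + a' • C) = 1 := by
        rw [ContinuousLinearMap.mul_def, ContinuousLinearMap.one_def,
          ContinuousLinearMap.comp_add, ContinuousLinearMap.comp_id,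
          ContinuousLinearMap.comp_smul, ContinuousLinearMap.smul_comp,
          smul_smul, ha's]
        rw [add_comm]
        exact hB
      have hRinv : Ring.inverse ((1 : EuclideanSpace ℝ (Fin d) →L[ℝ] EuclideanSpace ℝ (Fin d))
          + a' • C) = s • Minv := by
        have hu : IsUnit ((1 : EuclideanSpace ℝ (Fin d) →L[ℝ] EuclideanSpace ℝ (Fin d))
            + a' • C) := ⟨⟨_, s • Minv, hN1, hN2⟩, rfl⟩
        rcases hu with ⟨u, hu⟩
        rw [← hu, Ring.inverse_unit]
        have : (u : EuclideanSpace ℝ (Fin d) →L[ℝ] EuclideanSpace ℝ (Fin d))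
            * (s • Minv) = 1 := by rw [hu]; exact hN1
        calc (↑u⁻¹ : EuclideanSpace ℝ (Fin d) →L[ℝ] EuclideanSpace ℝ (Fin d))
            = ↑u⁻¹ * 1 := by rw [mul_one]
          _ = ↑u⁻¹ * (↑u * (s • Minv)) := by rw [this]
          _ = s • Minv := by rw [← mul_assoc, Units.inv_mul, one_mul]
      rw [heq, hRinv, ContinuousLinearMap.smul_apply, _root_.map_smul,
        smul_smul, hr's]
    -- the limit of F
    have hN : Tendsto (fun t => (1 : EuclideanSpace ℝ (Fin d) →L[ℝ] EuclideanSpace ℝ (Fin d))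
        + ((β t / t) * β t / σ t ^ 2) • C) (𝓝[>] (0:ℝ))
        (𝓝 (1 : EuclideanSpace ℝ (Fin d) →L[ℝ] EuclideanSpace ℝ (Fin d))) := by
      have h2 := (tendsto_const_nhds (x := (1 : EuclideanSpace ℝ (Fin d) →L[ℝ]
        EuclideanSpace ℝ (Fin d))) (f := 𝓝[>] (0:ℝ))).add
        (ha'.smul (tendsto_const_nhds (x := C)))
      have h3 : (1 : EuclideanSpace ℝ (Fin d) →L[ℝ] EuclideanSpace ℝ (Fin d))
          + (0:ℝ) • C = 1 := by
        rw [show ((0:ℝ) • C : EuclideanSpace ℝ (Fin d) →L[ℝ] EuclideanSpace ℝ (Fin d))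
            = 0 from ContinuousLinearMap.ext fun v => by
          simp [ContinuousLinearMap.smul_apply], add_zero]
      rwa [h3] at h2
    have hinv : Tendsto (fun t => Ring.inverse
        ((1 : EuclideanSpace ℝ (Fin d) →L[ℝ] EuclideanSpace ℝ (Fin d))
          + ((β t / t) * β t / σ t ^ 2) • C)) (𝓝[>] (0:ℝ))
        (𝓝 (1 : EuclideanSpace ℝ (Fin d) →L[ℝ] EuclideanSpace ℝ (Fin d))) := by
      have hc : ContinuousAt (Ring.inverse :
          (EuclideanSpace ℝ (Fin d) →L[ℝ] EuclideanSpace ℝ (Fin d)) → _) 1 :=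
        NormedRing.inverse_continuousAt
          (1 : (EuclideanSpace ℝ (Fin d) →L[ℝ] EuclideanSpace ℝ (Fin d))ˣ)
      have := hc.tendsto.comp hN
      rwa [Ring.inverse_one] at this
    have hw : Tendsto (fun t => x - β t • m) (𝓝[>] (0:ℝ)) (𝓝 x) := by
      have h2 := (tendsto_const_nhds (x := x) (f := 𝓝[>] (0:ℝ))).sub
        (hβ0'.smul (tendsto_const_nhds (x := m)))
      have h3 : x - (0:ℝ) • m = x := by rw [zero_smul, sub_zero]
      rwa [h3] at h2
    have happly : Tendsto (fun t => (Ring.inverse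
        ((1 : EuclideanSpace ℝ (Fin d) →L[ℝ] EuclideanSpace ℝ (Fin d))
          + ((β t / t) * β t / σ t ^ 2) • C)) (x - β t • m)) (𝓝[>] (0:ℝ)) (𝓝 x) := by
      have hcont : Continuous fun p : (EuclideanSpace ℝ (Fin d) →L[ℝ]
          EuclideanSpace ℝ (Fin d)) × EuclideanSpace ℝ (Fin d) => p.1 p.2 :=
        isBoundedBilinearMap_apply.continuous
      exact (hcont.tendsto ((1 : EuclideanSpace ℝ (Fin d) →L[ℝ]
        EuclideanSpace ℝ (Fin d)), x)).comp (hinv.prodMk_nhds hw)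
    have hF : Tendsto (fun t => ((β t / t) / σ t ^ 2) • C ((Ring.inverse
          ((1 : EuclideanSpace ℝ (Fin d) →L[ℝ] EuclideanSpace ℝ (Fin d))
            + ((β t / t) * β t / σ t ^ 2) • C)) (x - β t • m)) + m)
        (𝓝[>] (0:ℝ)) (𝓝 ((deriv β 0 / σ 0 ^ 2) • C x + m)) :=
      (hr'.smul ((C.continuous.tendsto x).comp happly)).add tendsto_const_nhds
    refine hF.congr' ?_
    filter_upwards [Ioo_mem_nhdsGT_of_mem (⟨le_rfl, one_pos⟩ : (0:ℝ) ∈ Ico 0 1)] with t ht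
    exact (hFeq t ht).symm
  refine ⟨hi, hii, ?_⟩
  -- part (iii)
  intro x
  have hβ'lim : Tendsto (deriv β) (𝓝[>] (0:ℝ)) (𝓝 (deriv β 0)) :=
    ((hβC.continuous_deriv le_rfl).tendsto 0).mono_left nhdsWithin_le_nhds
  have hσ'lim : Tendsto (deriv σ) (𝓝[>] (0:ℝ)) (𝓝 (deriv σ 0)) :=
    ((hσC.continuous_deriv le_rfl).tendsto 0).mono_left nhdsWithin_le_nhds
  have hσlim : Tendsto σ (𝓝[>] (0:ℝ)) (𝓝 (σ 0)) :=
    (hσC.continuous.tendsto 0).mono_left nhdsWithin_le_nhds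
  have hcm := hii x
  have h1 := hβ'lim.smul hcm
  have h2 := (hσ'lim.div hσlim hσ0.ne').smul
    ((tendsto_const_nhds (x := x) (f := 𝓝[>] (0:ℝ))).sub (hβ0'.smul hcm))
  have h3 := h1.add h2
  have hval : deriv β 0 • ((deriv β 0 / σ 0 ^ 2) • C x + m)
      + (deriv σ 0 / σ 0) • (x - (0:ℝ) • ((deriv β 0 / σ 0 ^ 2) • C x + m))
      = deriv β 0 • m + ((deriv β 0 ^ 2 / σ 0 ^ 2) • C x + (deriv σ 0 / σ 0) • x) := by
    module
  rw [← hval]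
  exact h3
end
end
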